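/- Let S be a Seidel matrix with smallest eigenvalue exactly −5 whose switching class has clique number ω([S]) = 4. Let G be a graph in the switching class of S containing a 4-clique {x_1, x_2, x_3, x_4}, and for i = 1,…,4 let P_i = { y ∉ {x_1,…,x_4} : y is adjacent to x_i and to no other x_j } be the (4,1)-pillars with respect to this clique. If there exists an edge of G joining a vertex of P_2 to a vertex of P_3, then |P_1| ≤ 19 and |P_4| ≤ 19. -/

import Mathlib

open Matrix

/-- A Seidel matrix: symmetric, zero diagonal, off-diagonal entries `±1`. -/
def IsSeidel {n : ℕ} (S : Matrix (Fin n) (Fin n) ℝ) : Prop :=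
  S.IsSymm ∧ (∀ i, S i i = 0) ∧ ∀ i j, i ≠ j → S i j = 1 ∨ S i j = -1

/-- Smallest eigenvalue of a real symmetric matrix (junk value `0` if not Hermitian). -/
noncomputable def minEig {m : Type*} [Fintype m] [DecidableEq m] (A : Matrix m m ℝ) : ℝ := by
  classical
  exact if hA : A.IsHermitian then ⨅ i, hA.eigenvalues i else 0

/-- Largest eigenvalue of a real symmetric matrix (junk value `0` if not Hermitian). -/
noncomputable def maxEig {m : Type*} [Fintype m] [DecidableEq m] (A : Matrix m m ℝ) : ℝ := by
  classical
  exact if hA : A.IsHermitian then ⨆ i, hA.eigenvalues i else 0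

/-- The Seidel matrix of a simple graph `G`, i.e. `J - I - 2A(G)`:
zero diagonal, `-1` on adjacent pairs, `1` on distinct non-adjacent pairs. -/
noncomputable def seidelOf {V : Type*} [Fintype V] (G : SimpleGraph V) : Matrix V V ℝ := by
  classical
  exact Matrix.of fun i j => if i = j then 0 else if G.Adj i j then -1 else 1

/-- Smallest eigenvalue of the Seidel matrix of a finite graph. -/
noncomputable def minSeidelEig {V : Type*} [Finite V] (G : SimpleGraph V) : ℝ := by
  classical
  letI := Fintype.ofFinite V
  exact minEig (seidelOf G)

/-- Spectral radius (largest adjacency eigenvalue) of a finite graph. -/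
noncomputable def specRad {V : Type*} [Finite V] (G : SimpleGraph V) : ℝ := by
  classical
  letI := Fintype.ofFinite V
  exact maxEig (G.adjMatrix ℝ)

/-- Switching equivalence: `T = D S D` for some diagonal `±1` matrix `D`. -/
def SwEquiv {n : ℕ} (S T : Matrix (Fin n) (Fin n) ℝ) : Prop :=
  ∃ ε : Fin n → ℝ, (∀ i, ε i = 1 ∨ ε i = -1) ∧
    T = Matrix.diagonal ε * S * Matrix.diagonal ε

/-- The switching graph of a Seidel matrix `S`: the graph on `2n` vertices whose Seidel
matrix is the block matrix `((S, I - S), (I - S, S))`, adjacency given by entries `-1`. -/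
def switchGraph {n : ℕ} (S : Matrix (Fin n) (Fin n) ℝ) : SimpleGraph (Fin n ⊕ Fin n) :=
  SimpleGraph.fromRel fun x y => Matrix.fromBlocks S (1 - S) (1 - S) S x y = -1

/-- Independence number of a graph. -/
noncomputable def indepNum {V : Type*} (G : SimpleGraph V) : ℕ := Gᶜ.cliqueNum

/-- The graph consisting of `t` disjoint copies of `K₂`. -/
def nK2 (t : ℕ) : SimpleGraph (Fin t × Fin 2) :=
  SimpleGraph.fromRel fun p q => p.1 = q.1


set_option maxHeartbeats 1000000

section SeidelAux


def Phi (A B1 B2 B3 D Z T1 T2 T3 T4 c1 c2 c3 c4 : ℤ) : ℤ :=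
  2*(-A*B1-A*B2-A*B3+A*D+A*Z-B1*B2-B1*B3-B1*D+B1*Z-B2*B3+B2*D-B2*Z+B3*D+B3*Z-D*Z)
  + 2*c1*T1*(-A+B1+B2+B3+D+Z) + 2*c2*T2*(-A+B1+B2+B3+D-Z)
  + 2*c3*T3*(-A+B1+B2+B3-D+Z) + 2*c4*T4*(-A+B1+B2+B3-D-Z)
  + 2*(c1*c2*T1*T2 + c1*c3*T1*T3 + c1*c4*T1*T4 + c2*c3*T2*T3 + c2*c4*T2*T4 + c3*c4*T3*T4)
  + T1*T1*(c1*c1-c1) + T2*T2*(c2*c2-c2) + T3*T3*(c3*c3-c3) + T4*T4*(c4*c4-c4)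
  + 5*(A*A+B1*B1+B2*B2+B3*B3+D*D+Z*Z) + 5*(c1*T1*T1+c2*T2*T2+c3*T3*T3+c4*T4*T4)

def L : List (List ℤ) := [
  [0,0,0,4,4,8,8,10,-8,-8,0,0,0,-5],
  [0,0,1,3,165,264,264,330,-264,-240,0,0,-55,-165],
  [0,1,0,3,165,264,264,330,-240,-264,0,-55,0,-165],
  [1,0,0,3,15,20,20,30,-24,-24,10,0,0,-15],
  [4,0,1,2,-110,-60,-66,-120,180,165,-55,0,30,110],
  [4,1,0,2,-110,-66,-60,-120,165,180,-55,30,0,110],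
  [5,0,0,2,-20,-10,-10,-15,36,36,-12,0,0,20],
  [3,0,3,2,693,660,770,1050,-1155,-924,330,0,-231,-693],
  [3,3,0,2,-693,-770,-660,-1050,924,1155,-330,231,0,693],
  [0,0,7,2,-6,-15,-18,-20,15,4,0,0,4,6],
  [0,0,9,0,-462,-1925,-2640,-2520,1925,-385,0,0,660,0],
  [0,7,0,2,6,18,15,20,-4,-15,0,-4,0,-6],
  [0,9,0,0,462,2640,1925,2520,385,-1925,0,-660,0,0],
  [1,0,6,2,99,198,225,270,-220,-90,55,0,-55,-99],
  [1,6,0,2,99,225,198,270,-90,-220,55,-55,0,-99],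
  [2,0,5,2,198,288,330,396,-360,-216,99,0,-88,-198],
  [2,5,0,2,198,330,288,396,-216,-360,99,-88,0,-198],
  [0,1,8,1,3465,11088,15400,15120,-11880,2310,0,2520,-3960,-3465],
  [0,2,8,0,-126,-462,-770,-693,693,-252,0,-198,252,0],
  [0,8,1,1,-3465,-15400,-11088,-15120,-2310,11880,0,3960,-2520,3465],
  [0,8,2,0,-126,-770,-462,-693,-252,693,0,252,-198,0],
  [1,0,8,1,660,1848,2520,2520,-1980,0,385,0,-660,-660],
  [1,8,0,1,660,2520,1848,2520,0,-1980,385,-660,0,-660],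
  [8,0,1,1,3465,-1540,-1320,0,-5390,-5040,1680,0,-924,-3465],
  [8,1,0,1,3465,-1320,-1540,0,-5040,-5390,1680,-924,0,-3465],
  [9,0,0,1,-10,6,6,0,18,18,-5,0,0,10],
  [0,3,7,1,-397670,-1040060,-1820105,-1616615,1763580,-533715,0,-482885,676039,397670],
  [0,4,7,0,0,-10,-30,-20,36,-24,0,-15,15,0],
  [0,5,6,0,0,0,10,5,-18,18,0,10,-10,0],
  [0,6,5,0,0,10,0,5,18,-18,0,-10,10,0],
  [0,7,3,1,397670,1820105,1040060,1616615,533715,-1763580,0,-676039,482885,-397670],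
  [0,7,4,0,0,-30,-10,-20,-24,36,0,15,-15,0],
  [3,0,7,1,185725,310080,426360,465120,-445740,-104880,93840,0,-133722,-185725],
  [3,7,0,1,185725,426360,310080,465120,-104880,-445740,93840,-133722,0,-185725],
  [7,0,3,1,55062,0,6118,27968,-92736,-70224,27531,0,-19152,-55062],
  [7,3,0,1,-55062,-6118,0,-27968,70224,92736,-27531,19152,0,55062],
  [3,1,8,0,-396,-924,-1512,-1386,1386,-231,-231,-308,504,0],
  [3,8,1,0,-396,-1512,-924,-1386,-231,1386,-231,504,-308,0],
  [5,0,6,1,15,15,20,24,-36,-15,10,0,-10,-15],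
  [5,6,0,1,15,20,15,24,-15,-36,10,-10,0,-15],
  [6,0,5,1,-4,-2,-3,-4,8,4,-2,0,2,4],
  [6,5,0,1,4,3,2,4,-4,-8,2,-2,0,-4],
  [5,0,8,0,-154,-231,-385,-385,440,0,-77,0,140,0],
  [5,8,0,0,-154,-385,-231,-385,0,440,-77,140,0,0],
  [12,0,1,0,-1386,1980,1925,1260,2310,2100,-660,0,420,0],
  [12,1,0,0,1386,-1925,-1980,-1260,-2100,-2310,660,-420,0,0],
  [13,0,0,0,189,-280,-280,-189,-280,-280,90,0,0,0],
  [4,3,7,0,31824,49504,111384,95472,-137088,41769,15912,37128,-52416,0],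
  [4,7,3,0,31824,111384,49504,95472,41769,-137088,15912,-52416,37128,0],
  [7,0,7,0,240,168,315,360,-588,-140,120,0,-168,0],
  [7,7,0,0,-240,-315,-168,-360,140,588,-120,168,0,0],
  [11,0,3,0,149226,-157080,-135660,-71060,-255816,-195415,75240,0,-53295,0],
  [11,3,0,0,-149226,135660,157080,71060,195415,255816,-75240,53295,0,0],
  [9,0,6,0,-720,165,-220,-440,1540,660,-360,0,396,0],
  [9,6,0,0,-720,-220,165,-440,660,1540,-360,396,0,0],
  [10,0,5,0,24,-12,-10,0,-45,-24,12,0,-10,0],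
  [10,5,0,0,-24,10,12,0,24,45,-12,10,0,0]]

def PhiL (e : List ℤ) : ℤ :=
  Phi (e.getD 4 0) (e.getD 5 0) (e.getD 6 0) (e.getD 7 0) (e.getD 8 0) (e.getD 9 0)
    (e.getD 10 0) (e.getD 11 0) (e.getD 12 0) (e.getD 13 0)
    (e.getD 0 0) (e.getD 1 0) (e.getD 2 0) (e.getD 3 0)

set_option maxHeartbeats 2000000 in
lemma LP : ∀ e ∈ L, PhiL e < 0 ∧ 0 ≤ e.getD 0 0 ∧ 0 ≤ e.getD 1 0 ∧ 0 ≤ e.getD 2 0 ∧ 0 ≤ e.getD 3 0 := by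
  decide

set_option maxHeartbeats 2000000 in
lemma Ldom : ∀ m1 < 13, ∀ m2 < 9, ∀ m3 < 9, ∀ m4 < 4, 20 ≤ m1+m2+m3+m4 →
    (L.any fun e => (e.getD 0 0).toNat ≤ m1 && (e.getD 1 0).toNat ≤ m2 &&
      (e.getD 2 0).toNat ≤ m3 && (e.getD 3 0).toNat ≤ m4) = true := by decide

lemma cover (m1 m2 m3 m4 : ℕ) (hs : 20 ≤ m1+m2+m3+m4) :
    ∃ c1 c2 c3 c4 : ℕ, ∃ A B1 B2 B3 D Z T1 T2 T3 T4 : ℤ,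
      c1 ≤ m1 ∧ c2 ≤ m2 ∧ c3 ≤ m3 ∧ c4 ≤ m4 ∧
      Phi A B1 B2 B3 D Z T1 T2 T3 T4 (c1:ℤ) (c2:ℤ) (c3:ℤ) (c4:ℤ) < 0 := by
  by_cases h1 : 13 ≤ m1
  · exact ⟨13,0,0,0, 189,-280,-280,-189,-280,-280,90,0,0,0,
      h1, Nat.zero_le _, Nat.zero_le _, Nat.zero_le _, by norm_num [Phi]⟩
  by_cases h2 : 9 ≤ m2
  · exact ⟨0,9,0,0, 462,2640,1925,2520,385,-1925,0,-660,0,0,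
      Nat.zero_le _, h2, Nat.zero_le _, Nat.zero_le _, by norm_num [Phi]⟩
  by_cases h3 : 9 ≤ m3
  · exact ⟨0,0,9,0, -462,-1925,-2640,-2520,1925,-385,0,0,660,0,
      Nat.zero_le _, Nat.zero_le _, h3, Nat.zero_le _, by norm_num [Phi]⟩
  by_cases h4 : 4 ≤ m4
  · exact ⟨0,0,0,4, 4,8,8,10,-8,-8,0,0,0,-5,
      Nat.zero_le _, Nat.zero_le _, Nat.zero_le _, h4, by norm_num [Phi]⟩
  have hany := Ldom m1 (by omega) m2 (by omega) m3 (by omega) m4 (by omega) hs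
  obtain ⟨e, heL, hb⟩ := List.any_eq_true.mp hany
  obtain ⟨hphi, hn0, hn1, hn2, hn3⟩ := LP e heL
  simp only [Bool.and_eq_true, decide_eq_true_eq] at hb
  refine ⟨(e.getD 0 0).toNat, (e.getD 1 0).toNat, (e.getD 2 0).toNat, (e.getD 3 0).toNat,
    e.getD 4 0, e.getD 5 0, e.getD 6 0, e.getD 7 0, e.getD 8 0, e.getD 9 0,
    e.getD 10 0, e.getD 11 0, e.getD 12 0, e.getD 13 0,
    hb.1.1.1, hb.1.1.2, hb.1.2, hb.2, ?_⟩
  rw [Int.toNat_of_nonneg hn0, Int.toNat_of_nonneg hn1, Int.toNat_of_nonneg hn2,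
    Int.toNat_of_nonneg hn3]
  exact hphi


noncomputable def ind {n : ℕ} (s : Finset (Fin n)) : Fin n → ℝ := fun i => if i ∈ s then 1 else 0

variable {n : ℕ} {M : Matrix (Fin n) (Fin n) ℝ} {s t : Finset (Fin n)}

lemma ind_dot (f : Fin n → ℝ) : ind s ⬝ᵥ f = ∑ i ∈ s, f i := by
  rw [dotProduct]
  rw [Finset.sum_congr rfl (fun i _ => show ind s i * f i = if i ∈ s then f i else 0 by
    simp [ind, ite_mul])]
  simp [Finset.sum_ite_mem]

lemma mulVec_ind : M *ᵥ ind t = fun i => ∑ j ∈ t, M i j := by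
  funext i
  rw [mulVec, dotProduct]
  rw [Finset.sum_congr rfl (fun j _ => show M i j * ind t j = if j ∈ t then M i j else 0 by
    simp [ind, mul_ite])]
  simp [Finset.sum_ite_mem]

lemma qf_ind : ind s ⬝ᵥ (M *ᵥ ind t) = ∑ i ∈ s, ∑ j ∈ t, M i j := by
  rw [mulVec_ind, ind_dot]

lemma dot_ind : ind s ⬝ᵥ ind t = ((s ∩ t).card : ℝ) := by
  rw [ind_dot]
  rw [Finset.sum_congr rfl (fun i _ => show ind t i = if i ∈ t then (1:ℝ) else 0 from rfl)]
  simp [Finset.sum_ite_mem, Finset.inter_comm]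

lemma dot_ind_disj (h : Disjoint s t) : ind s ⬝ᵥ ind t = 0 := by
  rw [dot_ind, Finset.disjoint_iff_inter_eq_empty.mp h]; simp

lemma dot_ind_self : ind s ⬝ᵥ ind s = (s.card : ℝ) := by rw [dot_ind, Finset.inter_self]

lemma dot_ind_single (a b : Fin n) (h : a ≠ b) : ind {a} ⬝ᵥ ind ({b} : Finset (Fin n)) = 0 := by
  apply dot_ind_disj; simp [h, h.symm]

lemma dot_ind_single_self (a : Fin n) : ind {a} ⬝ᵥ ind ({a} : Finset (Fin n)) = 1 := by
  rw [dot_ind_self]; simp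

lemma qf_single {a b : Fin n} : ind {a} ⬝ᵥ (M *ᵥ ind {b}) = M a b := by
  rw [qf_ind]; simp

lemma qf_single_set {a : Fin n} {e : ℝ} (h : ∀ j ∈ t, M a j = e) :
    ind {a} ⬝ᵥ (M *ᵥ ind t) = e * t.card := by
  rw [qf_ind, Finset.sum_singleton, Finset.sum_congr rfl h, Finset.sum_const, nsmul_eq_mul,
    mul_comm]

lemma qf_set_single {b : Fin n} {e : ℝ} (h : ∀ i ∈ s, M i b = e) :
    ind s ⬝ᵥ (M *ᵥ ind {b}) = e * s.card := by
  rw [qf_ind]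
  rw [Finset.sum_congr rfl (fun i hi => by rw [Finset.sum_singleton, h i hi])]
  rw [Finset.sum_const, nsmul_eq_mul, mul_comm]

lemma qf_set_set {e : ℝ} (h : ∀ i ∈ s, ∀ j ∈ t, M i j = e) :
    ind s ⬝ᵥ (M *ᵥ ind t) = e * s.card * t.card := by
  rw [qf_ind]
  rw [Finset.sum_congr rfl (fun i hi => by
    rw [Finset.sum_congr rfl (h i hi), Finset.sum_const, nsmul_eq_mul, mul_comm])]
  rw [Finset.sum_const, nsmul_eq_mul]; ring

lemma qf_set_self (h0 : ∀ i ∈ s, M i i = 0) (h1 : ∀ i ∈ s, ∀ j ∈ s, i ≠ j → M i j = 1) :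
    ind s ⬝ᵥ (M *ᵥ ind s) = (s.card : ℝ) * s.card - s.card := by
  rw [qf_ind]
  rw [Finset.sum_congr rfl (fun i hi => show (∑ j ∈ s, M i j) = (s.card : ℝ) - 1 by
    rw [Finset.sum_congr rfl (fun j hj => show M i j = if j = i then 0 else 1 by
      by_cases hij : j = i
      · rw [if_pos hij, hij, h0 i hi]
      · rw [if_neg hij]; exact h1 i hi j hj (fun h => hij h.symm))]
    rw [← Finset.add_sum_erase s _ hi, if_pos rfl, zero_add,
      Finset.sum_congr rfl (fun j hj => if_neg (Finset.ne_of_mem_erase hj)),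
      Finset.sum_const, nsmul_eq_mul, mul_one, Finset.cast_card_erase_of_mem hi])]
  rw [Finset.sum_const, nsmul_eq_mul]; ring

lemma psd_of_minEig {n : ℕ} (S : Matrix (Fin n) (Fin n) ℝ) (hsymm : S.IsSymm)
    (hmin : minEig S = -5) (w : Fin n → ℝ) :
    0 ≤ w ⬝ᵥ (S *ᵥ w) + 5 * (w ⬝ᵥ w) := by
  have hH : S.IsHermitian := by
    rwa [Matrix.IsHermitian, conjTranspose_eq_transpose_of_trivial]
  have heig : ∀ i, -5 ≤ hH.eigenvalues i := by
    intro i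
    rw [minEig, dif_pos hH] at hmin
    rw [← hmin]
    exact ciInf_le (Set.Finite.bddBelow (Set.finite_range _)) i
  set U : Matrix (Fin n) (Fin n) ℝ := (hH.eigenvectorUnitary : Matrix (Fin n) (Fin n) ℝ)
  have hUU : U * star U = 1 := Matrix.mem_unitaryGroup_iff.mp hH.eigenvectorUnitary.2
  set y : Fin n → ℝ := (star U) *ᵥ w with hy
  have hspec := hH.spectral_theorem
  have hUw : (star U) *ᵥ w = w ᵥ* U := by
    rw [Matrix.star_eq_conjTranspose, conjTranspose_eq_transpose_of_trivial, mulVec_transpose]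
  have hDg : Matrix.diagonal (RCLike.ofReal ∘ hH.eigenvalues) = Matrix.diagonal hH.eigenvalues := by
    ext i j; simp [Matrix.diagonal]
  have hform : w ⬝ᵥ (S *ᵥ w) = y ⬝ᵥ ((Matrix.diagonal hH.eigenvalues) *ᵥ y) := by
    conv_lhs => rw [hspec]
    rw [Unitary.conjStarAlgAut_apply, ← mulVec_mulVec, ← mulVec_mulVec, dotProduct_mulVec (A := U), hDg, hy, hUw]
  have hnorm : w ⬝ᵥ w = y ⬝ᵥ y := by
    conv_lhs => rw [show w ⬝ᵥ w = w ⬝ᵥ ((1 : Matrix (Fin n) (Fin n) ℝ) *ᵥ w) by rw [one_mulVec],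
      ← hUU, ← mulVec_mulVec, dotProduct_mulVec (A := U)]
    rw [hy, hUw]
  rw [hform, hnorm]
  have : y ⬝ᵥ (Matrix.diagonal hH.eigenvalues *ᵥ y) = ∑ i, hH.eigenvalues i * (y i)^2 := by
    simp [dotProduct, mulVec_diagonal]
    ring_nf
    exact Finset.sum_congr rfl fun i _ => by ring
  rw [this, dotProduct, Finset.mul_sum, ← Finset.sum_add_distrib]
  apply Finset.sum_nonneg
  intro i _
  have h1 : 0 ≤ (y i)^2 := sq_nonneg _
  nlinarith [heig i]

lemma swEntry {S T : Matrix (Fin n) (Fin n) ℝ} {ε : Fin n → ℝ}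
    (hT : T = Matrix.diagonal ε * S * Matrix.diagonal ε) (i j : Fin n) :
    T i j = ε i * S i j * ε j := by
  rw [hT, Matrix.mul_apply]
  simp [Matrix.mul_apply, Matrix.diagonal, Finset.sum_ite_eq, Finset.sum_ite_eq']

lemma sw_psd {S T : Matrix (Fin n) (Fin n) ℝ} {ε : Fin n → ℝ}
    (hε : ∀ i, ε i = 1 ∨ ε i = -1) (hT : T = Matrix.diagonal ε * S * Matrix.diagonal ε)
    (hS : ∀ w : Fin n → ℝ, 0 ≤ w ⬝ᵥ (S *ᵥ w) + 5 * (w ⬝ᵥ w)) (w : Fin n → ℝ) :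
    0 ≤ w ⬝ᵥ (T *ᵥ w) + 5 * (w ⬝ᵥ w) := by
  have hsq : ∀ i, ε i * ε i = 1 := by
    intro i; rcases hε i with h | h <;> rw [h] <;> norm_num
  set w' : Fin n → ℝ := fun i => ε i * w i with hw'
  have h1 : w ⬝ᵥ (T *ᵥ w) = w' ⬝ᵥ (S *ᵥ w') := by
    rw [dotProduct, dotProduct]
    apply Finset.sum_congr rfl
    intro i _
    simp only [mulVec, dotProduct, Finset.mul_sum]
    apply Finset.sum_congr rfl
    intro j _
    rw [swEntry hT]
    simp only [hw']
    ring
  have h2 : w ⬝ᵥ w = w' ⬝ᵥ w' := by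
    rw [dotProduct, dotProduct]
    apply Finset.sum_congr rfl
    intro i _
    simp only [hw']
    linear_combination (-(w i * w i)) * hsq i
  rw [h1, h2]
  exact hS w'

lemma clique5 {S T : Matrix (Fin n) (Fin n) ℝ} {ε : Fin n → ℝ}
    (hε : ∀ i, ε i = 1 ∨ ε i = -1) (hT : T = Matrix.diagonal ε * S * Matrix.diagonal ε)
    (hω : (switchGraph S).cliqueNum = 4)
    (a : Fin 5 → Fin n) (hinj : Function.Injective a)
    (δ : Fin 5 → ℝ) (hδ : ∀ i, δ i = 1 ∨ δ i = -1)
    (hpat : ∀ i j, i ≠ j → δ i * δ j * T (a i) (a j) = -1) : False := by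
  classical
  have hsqε : ∀ i, ε i * ε i = 1 := by
    intro i; rcases hε i with h | h <;> rw [h] <;> norm_num
  have hsqδ : ∀ i, δ i * δ i = 1 := by
    intro i; rcases hδ i with h | h <;> rw [h] <;> norm_num
  -- value of T
  have hTv : ∀ i j, i ≠ j → T (a i) (a j) = -(δ i * δ j) := by
    intro i j hij
    have h := hpat i j hij
    linear_combination (δ i * δ j) * h - T (a i) (a j) * (δ j * δ j) * (hsqδ i)
      - T (a i) (a j) * (hsqδ j)
  -- map to switch graph
  set f : Fin 5 → (Fin n ⊕ Fin n) :=
    fun i => if ε (a i) * δ i = 1 then Sum.inl (a i) else Sum.inr (a i) with hf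
  have hfinj : Function.Injective f := by
    intro i j hij
    simp only [hf] at hij
    by_cases h1 : ε (a i) * δ i = 1 <;> by_cases h2 : ε (a j) * δ j = 1 <;>
      simp [h1, h2] at hij <;> exact hinj hij
  have hadj : ∀ i j, i ≠ j → (switchGraph S).Adj (f i) (f j) := by
    intro i j hij
    have hSv : S (a i) (a j) = -((ε (a i) * δ i) * (ε (a j) * δ j)) := by
      have hc : ε (a i) * S (a i) (a j) * ε (a j) = -(δ i * δ j) :=
        (swEntry hT (a i) (a j)).symm.trans (hTv i j hij)
      linear_combination (ε (a i) * ε (a j)) * hc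
        - S (a i) (a j) * (ε (a j) * ε (a j)) * hsqε (a i) - S (a i) (a j) * hsqε (a j)
    have haij : a i ≠ a j := fun h => hij (hinj h)
    rw [switchGraph, SimpleGraph.fromRel_adj]
    refine ⟨?_, Or.inl ?_⟩
    · simp only [hf]
      by_cases h1 : ε (a i) * δ i = 1 <;> by_cases h2 : ε (a j) * δ j = 1 <;>
        simp [h1, h2, haij]
    · have hone : (1 : Matrix (Fin n) (Fin n) ℝ) (a i) (a j) = 0 := by
        simp [Matrix.one_apply, haij]
      have hε1 : ε (a i) * δ i = 1 ∨ ε (a i) * δ i = -1 := by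
        rcases hε (a i) with h | h <;> rcases hδ i with h' | h' <;> rw [h, h'] <;> norm_num
      have hε2 : ε (a j) * δ j = 1 ∨ ε (a j) * δ j = -1 := by
        rcases hε (a j) with h | h <;> rcases hδ j with h' | h' <;> rw [h, h'] <;> norm_num
      simp only [hf]
      rcases hε1 with h1 | h1 <;> rcases hε2 with h2 | h2 <;>
        simp only [h1, h2, if_pos, if_neg, one_ne_zero] <;> norm_num <;>
        simp [Matrix.fromBlocks, hSv, h1, h2, Matrix.sub_apply, hone]
  -- build the clique
  have hclique : (switchGraph S).IsNClique 5 (Finset.image f Finset.univ) := by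
    constructor
    · intro p hp q hq hpq
      simp only [Finset.coe_image, Set.mem_image] at hp hq
      obtain ⟨i, _, rfl⟩ := hp
      obtain ⟨j, _, rfl⟩ := hq
      exact hadj i j (fun h => hpq (by rw [h]))
    · rw [Finset.card_image_of_injective _ hfinj, Finset.card_univ, Fintype.card_fin]
  have h5 : 5 ≤ (switchGraph S).cliqueNum := by
    have := SimpleGraph.IsClique.card_le_cliqueNum (tc := hclique.isClique)
    rwa [hclique.card_eq] at this
  omega

lemma Tadj' {G : SimpleGraph (Fin n)} {i j : Fin n} (h : G.Adj i j) : seidelOf G i j = -1 := by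
  simp [seidelOf, h, G.ne_of_adj h]

lemma Tnon' {G : SimpleGraph (Fin n)} {i j : Fin n} (hne : i ≠ j) (h : ¬G.Adj i j) :
    seidelOf G i j = 1 := by
  simp [seidelOf, h, hne]

lemma pillar_indep {S : Matrix (Fin n) (Fin n) ℝ} {ε : Fin n → ℝ} {G : SimpleGraph (Fin n)}
    (hε : ∀ i, ε i = 1 ∨ ε i = -1)
    (hT : seidelOf G = Matrix.diagonal ε * S * Matrix.diagonal ε)
    (hω : (switchGraph S).cliqueNum = 4)
    (p q r y z : Fin n)
    (hpq : G.Adj p q) (hpr : G.Adj p r) (hqr : G.Adj q r) (hyz : G.Adj y z)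
    (hyp : ¬G.Adj y p) (hyq : ¬G.Adj y q) (hyr : ¬G.Adj y r)
    (hzp : ¬G.Adj z p) (hzq : ¬G.Adj z q) (hzr : ¬G.Adj z r)
    (hynep : y ≠ p) (hyneq : y ≠ q) (hyner : y ≠ r)
    (hznep : z ≠ p) (hzneq : z ≠ q) (hzner : z ≠ r) : False := by
  have hpqne := hpq.ne
  have hprne := hpr.ne
  have hqrne := hqr.ne
  have hyzne := hyz.ne
  have hTpq := Tadj' hpq
  have hTqp := Tadj' hpq.symm
  have hTpr := Tadj' hpr
  have hTrp := Tadj' hpr.symm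
  have hTqr := Tadj' hqr
  have hTrq := Tadj' hqr.symm
  have hTyz := Tadj' hyz
  have hTzy := Tadj' hyz.symm
  have hTyp := Tnon' hynep hyp
  have hTpy := Tnon' (Ne.symm hynep) (fun h => hyp h.symm)
  have hTyq := Tnon' hyneq hyq
  have hTqy := Tnon' (Ne.symm hyneq) (fun h => hyq h.symm)
  have hTyr := Tnon' hyner hyr
  have hTry := Tnon' (Ne.symm hyner) (fun h => hyr h.symm)
  have hTzp := Tnon' hznep hzp
  have hTpz := Tnon' (Ne.symm hznep) (fun h => hzp h.symm)
  have hTzq := Tnon' hzneq hzq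
  have hTqz := Tnon' (Ne.symm hzneq) (fun h => hzq h.symm)
  have hTzr := Tnon' hzner hzr
  have hTrz := Tnon' (Ne.symm hzner) (fun h => hzr h.symm)
  have hPpq : (1:ℝ) * (1:ℝ) * seidelOf G p q = -1 := by rw [hTpq]; norm_num
  have hPqp : (1:ℝ) * (1:ℝ) * seidelOf G q p = -1 := by rw [hTqp]; norm_num
  have hPpr : (1:ℝ) * (1:ℝ) * seidelOf G p r = -1 := by rw [hTpr]; norm_num
  have hPrp : (1:ℝ) * (1:ℝ) * seidelOf G r p = -1 := by rw [hTrp]; norm_num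
  have hPqr : (1:ℝ) * (1:ℝ) * seidelOf G q r = -1 := by rw [hTqr]; norm_num
  have hPrq : (1:ℝ) * (1:ℝ) * seidelOf G r q = -1 := by rw [hTrq]; norm_num
  have hPyz : (-1:ℝ) * (-1:ℝ) * seidelOf G y z = -1 := by rw [hTyz]; norm_num
  have hPzy : (-1:ℝ) * (-1:ℝ) * seidelOf G z y = -1 := by rw [hTzy]; norm_num
  have hPyp : (-1:ℝ) * (1:ℝ) * seidelOf G y p = -1 := by rw [hTyp]; norm_num
  have hPpy : (1:ℝ) * (-1:ℝ) * seidelOf G p y = -1 := by rw [hTpy]; norm_num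
  have hPyq : (-1:ℝ) * (1:ℝ) * seidelOf G y q = -1 := by rw [hTyq]; norm_num
  have hPqy : (1:ℝ) * (-1:ℝ) * seidelOf G q y = -1 := by rw [hTqy]; norm_num
  have hPyr : (-1:ℝ) * (1:ℝ) * seidelOf G y r = -1 := by rw [hTyr]; norm_num
  have hPry : (1:ℝ) * (-1:ℝ) * seidelOf G r y = -1 := by rw [hTry]; norm_num
  have hPzp : (-1:ℝ) * (1:ℝ) * seidelOf G z p = -1 := by rw [hTzp]; norm_num
  have hPpz : (1:ℝ) * (-1:ℝ) * seidelOf G p z = -1 := by rw [hTpz]; norm_num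
  have hPzq : (-1:ℝ) * (1:ℝ) * seidelOf G z q = -1 := by rw [hTzq]; norm_num
  have hPqz : (1:ℝ) * (-1:ℝ) * seidelOf G q z = -1 := by rw [hTqz]; norm_num
  have hPzr : (-1:ℝ) * (1:ℝ) * seidelOf G z r = -1 := by rw [hTzr]; norm_num
  have hPrz : (1:ℝ) * (-1:ℝ) * seidelOf G r z = -1 := by rw [hTrz]; norm_num
  apply clique5 hε hT hω ![p, q, r, y, z] ?_ ![1, 1, 1, -1, -1] ?_ ?_
  · intro i j hij
    fin_cases i <;> fin_cases j <;>
      first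
        | rfl
        | exact absurd hij hpqne
        | exact absurd hij (Ne.symm hpqne)
        | exact absurd hij hprne
        | exact absurd hij (Ne.symm hprne)
        | exact absurd hij hqrne
        | exact absurd hij (Ne.symm hqrne)
        | exact absurd hij hyzne
        | exact absurd hij (Ne.symm hyzne)
        | exact absurd hij hynep
        | exact absurd hij (Ne.symm hynep)
        | exact absurd hij hyneq
        | exact absurd hij (Ne.symm hyneq)
        | exact absurd hij hyner
        | exact absurd hij (Ne.symm hyner)
        | exact absurd hij hznep
        | exact absurd hij (Ne.symm hznep)
        | exact absurd hij hzneq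
        | exact absurd hij (Ne.symm hzneq)
        | exact absurd hij hzner
        | exact absurd hij (Ne.symm hzner)
  · intro i
    fin_cases i <;> norm_num
  · intro i j hij
    fin_cases i <;> fin_cases j <;>
      first
        | exact absurd rfl hij
        | exact hPpq
        | exact hPqp
        | exact hPpr
        | exact hPrp
        | exact hPqr
        | exact hPrq
        | exact hPyz
        | exact hPzy
        | exact hPyp
        | exact hPpy
        | exact hPyq
        | exact hPqy
        | exact hPyr
        | exact hPry
        | exact hPzp
        | exact hPpz
        | exact hPzq
        | exact hPqz
        | exact hPzr
        | exact hPrz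


lemma key {n : ℕ} (T : Matrix (Fin n) (Fin n) ℝ) (G : SimpleGraph (Fin n))
    (hTdef : T = seidelOf G)
    (hpsd : ∀ w : Fin n → ℝ, 0 ≤ w ⬝ᵥ (T *ᵥ w) + 5 * (w ⬝ᵥ w))
    (x0 x1 x2 x3 u v : Fin n)
    (hx01 : G.Adj x0 x1) (hx02 : G.Adj x0 x2) (hx03 : G.Adj x0 x3)
    (hx12 : G.Adj x1 x2) (hx13 : G.Adj x1 x3) (hx23 : G.Adj x2 x3)
    (hux1 : G.Adj u x1) (hnux0 : ¬G.Adj u x0) (hnux2 : ¬G.Adj u x2) (hnux3 : ¬G.Adj u x3)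
    (hneux0 : u ≠ x0) (hneux2 : u ≠ x2) (hneux3 : u ≠ x3)
    (hvx2 : G.Adj v x2) (hnvx0 : ¬G.Adj v x0) (hnvx1 : ¬G.Adj v x1) (hnvx3 : ¬G.Adj v x3)
    (hnevx0 : v ≠ x0) (hnevx1 : v ≠ x1) (hnevx3 : v ≠ x3)
    (huv : G.Adj u v)
    (Q : Set (Fin n))
    (hQ : ∀ y ∈ Q, G.Adj y x0 ∧ (¬G.Adj y x1 ∧ ¬G.Adj y x2 ∧ ¬G.Adj y x3) ∧
        (y ≠ x1 ∧ y ≠ x2 ∧ y ≠ x3) ∧ (y ≠ u ∧ y ≠ v))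
    (hindep : ∀ y ∈ Q, ∀ z ∈ Q, y ≠ z → ¬G.Adj y z) :
    Q.ncard ≤ 19 := by
  classical
  have Tadj : ∀ i j, G.Adj i j → T i j = -1 := by
    intro i j h
    rw [hTdef]
    simp [seidelOf, h, G.ne_of_adj h]
  have Tnon : ∀ i j, i ≠ j → ¬G.Adj i j → T i j = 1 := by
    intro i j hne h
    rw [hTdef]
    simp [seidelOf, h, hne]
  have Tdiag : ∀ i, T i i = 0 := by
    intro i
    rw [hTdef]
    simp [seidelOf]
  by_contra hle
  push_neg at hle
  have hfin : Q.Finite := Set.toFinite Q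
  set F0 := hfin.toFinset with hF0
  have hF0card : 20 ≤ F0.card := by
    rw [hF0, ← Set.ncard_eq_toFinset_card Q hfin]
    omega
  set Fu := F0.filter (fun y => G.Adj y u) with hFu
  set Fnu := F0.filter (fun y => ¬G.Adj y u) with hFnu
  set Z4 := Fu.filter (fun y => G.Adj y v) with hZ4
  set Z3 := Fu.filter (fun y => ¬G.Adj y v) with hZ3
  set Z2 := Fnu.filter (fun y => G.Adj y v) with hZ2
  set Z1 := Fnu.filter (fun y => ¬G.Adj y v) with hZ1
  have hcard : Z1.card + Z2.card + Z3.card + Z4.card = F0.card := by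
    have h1 := Finset.card_filter_add_card_filter_not (s := F0)
      (p := fun y => G.Adj y u)
    have h2 := Finset.card_filter_add_card_filter_not (s := Fu)
      (p := fun y => G.Adj y v)
    have h3 := Finset.card_filter_add_card_filter_not (s := Fnu)
      (p := fun y => G.Adj y v)
    rw [← hFu, ← hFnu] at h1
    rw [← hZ4, ← hZ3] at h2
    rw [← hZ2, ← hZ1] at h3
    omega
  obtain ⟨c1, c2, c3, c4, iA, iB1, iB2, iB3, iD, iZ, iT1, iT2, iT3, iT4,
    hc1, hc2, hc3, hc4, hphi⟩ := cover Z1.card Z2.card Z3.card Z4.card (by omega)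
  obtain ⟨W1, hW1sub, hW1card⟩ := Finset.exists_subset_card_eq hc1
  obtain ⟨W2, hW2sub, hW2card⟩ := Finset.exists_subset_card_eq hc2
  obtain ⟨W3, hW3sub, hW3card⟩ := Finset.exists_subset_card_eq hc3
  obtain ⟨W4, hW4sub, hW4card⟩ := Finset.exists_subset_card_eq hc4
  have hW1m : ∀ y ∈ W1, y ∈ Q ∧ ¬G.Adj y u ∧ ¬G.Adj y v := by
    intro y hy
    have h := hW1sub hy
    rw [hZ1, Finset.mem_filter, hFnu, Finset.mem_filter, hF0, Set.Finite.mem_toFinset] at h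
    exact ⟨h.1.1, h.1.2, h.2⟩
  have hW2m : ∀ y ∈ W2, y ∈ Q ∧ ¬G.Adj y u ∧ G.Adj y v := by
    intro y hy
    have h := hW2sub hy
    rw [hZ2, Finset.mem_filter, hFnu, Finset.mem_filter, hF0, Set.Finite.mem_toFinset] at h
    exact ⟨h.1.1, h.1.2, h.2⟩
  have hW3m : ∀ y ∈ W3, y ∈ Q ∧ G.Adj y u ∧ ¬G.Adj y v := by
    intro y hy
    have h := hW3sub hy
    rw [hZ3, Finset.mem_filter, hFu, Finset.mem_filter, hF0, Set.Finite.mem_toFinset] at h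
    exact ⟨h.1.1, h.1.2, h.2⟩
  have hW4m : ∀ y ∈ W4, y ∈ Q ∧ G.Adj y u ∧ G.Adj y v := by
    intro y hy
    have h := hW4sub hy
    rw [hZ4, Finset.mem_filter, hFu, Finset.mem_filter, hF0, Set.Finite.mem_toFinset] at h
    exact ⟨h.1.1, h.1.2, h.2⟩
  have hdis12 : Disjoint W1 W2 := Finset.disjoint_left.mpr (fun {a} ha hb => absurd ((hW2m a hb).2.2) ((hW1m a ha).2.2))
  have hdis13 : Disjoint W1 W3 := Finset.disjoint_left.mpr (fun {a} ha hb => absurd ((hW3m a hb).2.1) ((hW1m a ha).2.1))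
  have hdis14 : Disjoint W1 W4 := Finset.disjoint_left.mpr (fun {a} ha hb => absurd ((hW4m a hb).2.1) ((hW1m a ha).2.1))
  have hdis23 : Disjoint W2 W3 := Finset.disjoint_left.mpr (fun {a} ha hb => absurd ((hW3m a hb).2.1) ((hW2m a ha).2.1))
  have hdis24 : Disjoint W2 W4 := Finset.disjoint_left.mpr (fun {a} ha hb => absurd ((hW4m a hb).2.1) ((hW2m a ha).2.1))
  have hdis34 : Disjoint W3 W4 := Finset.disjoint_left.mpr (fun {a} ha hb => absurd ((hW4m a hb).2.2) ((hW3m a ha).2.2))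
  have hE00 : ind {x0} ⬝ᵥ (T *ᵥ ind {x0}) = (0:ℝ) := by rw [qf_single]; exact Tdiag x0
  have hE01 : ind {x0} ⬝ᵥ (T *ᵥ ind {x1}) = (-1:ℝ) := by rw [qf_single]; exact Tadj x0 x1 hx01
  have hE02 : ind {x0} ⬝ᵥ (T *ᵥ ind {x2}) = (-1:ℝ) := by rw [qf_single]; exact Tadj x0 x2 hx02
  have hE03 : ind {x0} ⬝ᵥ (T *ᵥ ind {x3}) = (-1:ℝ) := by rw [qf_single]; exact Tadj x0 x3 hx03
  have hE04 : ind {x0} ⬝ᵥ (T *ᵥ ind {u}) = (1:ℝ) := by rw [qf_single]; exact Tnon x0 u (Ne.symm hneux0) (fun hh => hnux0 hh.symm)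
  have hE05 : ind {x0} ⬝ᵥ (T *ᵥ ind {v}) = (1:ℝ) := by rw [qf_single]; exact Tnon x0 v (Ne.symm hnevx0) (fun hh => hnvx0 hh.symm)
  have hE06 : ind {x0} ⬝ᵥ (T *ᵥ ind W1) = (-1:ℝ) * (W1.card : ℝ) := by
    apply qf_single_set
    intro y hy
    obtain ⟨hyQ, hyu, hyv⟩ := hW1m y hy
    obtain ⟨hqa, ⟨hq1, hq2, hq3⟩, ⟨hn1, hn2, hn3⟩, hnu, hnv⟩ := hQ y hyQ
    exact Tadj x0 y hqa.symm
  have hE07 : ind {x0} ⬝ᵥ (T *ᵥ ind W2) = (-1:ℝ) * (W2.card : ℝ) := by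
    apply qf_single_set
    intro y hy
    obtain ⟨hyQ, hyu, hyv⟩ := hW2m y hy
    obtain ⟨hqa, ⟨hq1, hq2, hq3⟩, ⟨hn1, hn2, hn3⟩, hnu, hnv⟩ := hQ y hyQ
    exact Tadj x0 y hqa.symm
  have hE08 : ind {x0} ⬝ᵥ (T *ᵥ ind W3) = (-1:ℝ) * (W3.card : ℝ) := by
    apply qf_single_set
    intro y hy
    obtain ⟨hyQ, hyu, hyv⟩ := hW3m y hy
    obtain ⟨hqa, ⟨hq1, hq2, hq3⟩, ⟨hn1, hn2, hn3⟩, hnu, hnv⟩ := hQ y hyQ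
    exact Tadj x0 y hqa.symm
  have hE09 : ind {x0} ⬝ᵥ (T *ᵥ ind W4) = (-1:ℝ) * (W4.card : ℝ) := by
    apply qf_single_set
    intro y hy
    obtain ⟨hyQ, hyu, hyv⟩ := hW4m y hy
    obtain ⟨hqa, ⟨hq1, hq2, hq3⟩, ⟨hn1, hn2, hn3⟩, hnu, hnv⟩ := hQ y hyQ
    exact Tadj x0 y hqa.symm
  have hE10 : ind {x1} ⬝ᵥ (T *ᵥ ind {x0}) = (-1:ℝ) := by rw [qf_single]; exact Tadj x1 x0 hx01.symm
  have hE11 : ind {x1} ⬝ᵥ (T *ᵥ ind {x1}) = (0:ℝ) := by rw [qf_single]; exact Tdiag x1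
  have hE12 : ind {x1} ⬝ᵥ (T *ᵥ ind {x2}) = (-1:ℝ) := by rw [qf_single]; exact Tadj x1 x2 hx12
  have hE13 : ind {x1} ⬝ᵥ (T *ᵥ ind {x3}) = (-1:ℝ) := by rw [qf_single]; exact Tadj x1 x3 hx13
  have hE14 : ind {x1} ⬝ᵥ (T *ᵥ ind {u}) = (-1:ℝ) := by rw [qf_single]; exact Tadj x1 u hux1.symm
  have hE15 : ind {x1} ⬝ᵥ (T *ᵥ ind {v}) = (1:ℝ) := by rw [qf_single]; exact Tnon x1 v (Ne.symm hnevx1) (fun hh => hnvx1 hh.symm)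
  have hE16 : ind {x1} ⬝ᵥ (T *ᵥ ind W1) = (1:ℝ) * (W1.card : ℝ) := by
    apply qf_single_set
    intro y hy
    obtain ⟨hyQ, hyu, hyv⟩ := hW1m y hy
    obtain ⟨hqa, ⟨hq1, hq2, hq3⟩, ⟨hn1, hn2, hn3⟩, hnu, hnv⟩ := hQ y hyQ
    exact Tnon x1 y (Ne.symm hn1) (fun hh => hq1 hh.symm)
  have hE17 : ind {x1} ⬝ᵥ (T *ᵥ ind W2) = (1:ℝ) * (W2.card : ℝ) := by
    apply qf_single_set
    intro y hy
    obtain ⟨hyQ, hyu, hyv⟩ := hW2m y hy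
    obtain ⟨hqa, ⟨hq1, hq2, hq3⟩, ⟨hn1, hn2, hn3⟩, hnu, hnv⟩ := hQ y hyQ
    exact Tnon x1 y (Ne.symm hn1) (fun hh => hq1 hh.symm)
  have hE18 : ind {x1} ⬝ᵥ (T *ᵥ ind W3) = (1:ℝ) * (W3.card : ℝ) := by
    apply qf_single_set
    intro y hy
    obtain ⟨hyQ, hyu, hyv⟩ := hW3m y hy
    obtain ⟨hqa, ⟨hq1, hq2, hq3⟩, ⟨hn1, hn2, hn3⟩, hnu, hnv⟩ := hQ y hyQ
    exact Tnon x1 y (Ne.symm hn1) (fun hh => hq1 hh.symm)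
  have hE19 : ind {x1} ⬝ᵥ (T *ᵥ ind W4) = (1:ℝ) * (W4.card : ℝ) := by
    apply qf_single_set
    intro y hy
    obtain ⟨hyQ, hyu, hyv⟩ := hW4m y hy
    obtain ⟨hqa, ⟨hq1, hq2, hq3⟩, ⟨hn1, hn2, hn3⟩, hnu, hnv⟩ := hQ y hyQ
    exact Tnon x1 y (Ne.symm hn1) (fun hh => hq1 hh.symm)
  have hE20 : ind {x2} ⬝ᵥ (T *ᵥ ind {x0}) = (-1:ℝ) := by rw [qf_single]; exact Tadj x2 x0 hx02.symm
  have hE21 : ind {x2} ⬝ᵥ (T *ᵥ ind {x1}) = (-1:ℝ) := by rw [qf_single]; exact Tadj x2 x1 hx12.symm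
  have hE22 : ind {x2} ⬝ᵥ (T *ᵥ ind {x2}) = (0:ℝ) := by rw [qf_single]; exact Tdiag x2
  have hE23 : ind {x2} ⬝ᵥ (T *ᵥ ind {x3}) = (-1:ℝ) := by rw [qf_single]; exact Tadj x2 x3 hx23
  have hE24 : ind {x2} ⬝ᵥ (T *ᵥ ind {u}) = (1:ℝ) := by rw [qf_single]; exact Tnon x2 u (Ne.symm hneux2) (fun hh => hnux2 hh.symm)
  have hE25 : ind {x2} ⬝ᵥ (T *ᵥ ind {v}) = (-1:ℝ) := by rw [qf_single]; exact Tadj x2 v hvx2.symm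
  have hE26 : ind {x2} ⬝ᵥ (T *ᵥ ind W1) = (1:ℝ) * (W1.card : ℝ) := by
    apply qf_single_set
    intro y hy
    obtain ⟨hyQ, hyu, hyv⟩ := hW1m y hy
    obtain ⟨hqa, ⟨hq1, hq2, hq3⟩, ⟨hn1, hn2, hn3⟩, hnu, hnv⟩ := hQ y hyQ
    exact Tnon x2 y (Ne.symm hn2) (fun hh => hq2 hh.symm)
  have hE27 : ind {x2} ⬝ᵥ (T *ᵥ ind W2) = (1:ℝ) * (W2.card : ℝ) := by
    apply qf_single_set
    intro y hy
    obtain ⟨hyQ, hyu, hyv⟩ := hW2m y hy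
    obtain ⟨hqa, ⟨hq1, hq2, hq3⟩, ⟨hn1, hn2, hn3⟩, hnu, hnv⟩ := hQ y hyQ
    exact Tnon x2 y (Ne.symm hn2) (fun hh => hq2 hh.symm)
  have hE28 : ind {x2} ⬝ᵥ (T *ᵥ ind W3) = (1:ℝ) * (W3.card : ℝ) := by
    apply qf_single_set
    intro y hy
    obtain ⟨hyQ, hyu, hyv⟩ := hW3m y hy
    obtain ⟨hqa, ⟨hq1, hq2, hq3⟩, ⟨hn1, hn2, hn3⟩, hnu, hnv⟩ := hQ y hyQ
    exact Tnon x2 y (Ne.symm hn2) (fun hh => hq2 hh.symm)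
  have hE29 : ind {x2} ⬝ᵥ (T *ᵥ ind W4) = (1:ℝ) * (W4.card : ℝ) := by
    apply qf_single_set
    intro y hy
    obtain ⟨hyQ, hyu, hyv⟩ := hW4m y hy
    obtain ⟨hqa, ⟨hq1, hq2, hq3⟩, ⟨hn1, hn2, hn3⟩, hnu, hnv⟩ := hQ y hyQ
    exact Tnon x2 y (Ne.symm hn2) (fun hh => hq2 hh.symm)
  have hE30 : ind {x3} ⬝ᵥ (T *ᵥ ind {x0}) = (-1:ℝ) := by rw [qf_single]; exact Tadj x3 x0 hx03.symm
  have hE31 : ind {x3} ⬝ᵥ (T *ᵥ ind {x1}) = (-1:ℝ) := by rw [qf_single]; exact Tadj x3 x1 hx13.symm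
  have hE32 : ind {x3} ⬝ᵥ (T *ᵥ ind {x2}) = (-1:ℝ) := by rw [qf_single]; exact Tadj x3 x2 hx23.symm
  have hE33 : ind {x3} ⬝ᵥ (T *ᵥ ind {x3}) = (0:ℝ) := by rw [qf_single]; exact Tdiag x3
  have hE34 : ind {x3} ⬝ᵥ (T *ᵥ ind {u}) = (1:ℝ) := by rw [qf_single]; exact Tnon x3 u (Ne.symm hneux3) (fun hh => hnux3 hh.symm)
  have hE35 : ind {x3} ⬝ᵥ (T *ᵥ ind {v}) = (1:ℝ) := by rw [qf_single]; exact Tnon x3 v (Ne.symm hnevx3) (fun hh => hnvx3 hh.symm)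
  have hE36 : ind {x3} ⬝ᵥ (T *ᵥ ind W1) = (1:ℝ) * (W1.card : ℝ) := by
    apply qf_single_set
    intro y hy
    obtain ⟨hyQ, hyu, hyv⟩ := hW1m y hy
    obtain ⟨hqa, ⟨hq1, hq2, hq3⟩, ⟨hn1, hn2, hn3⟩, hnu, hnv⟩ := hQ y hyQ
    exact Tnon x3 y (Ne.symm hn3) (fun hh => hq3 hh.symm)
  have hE37 : ind {x3} ⬝ᵥ (T *ᵥ ind W2) = (1:ℝ) * (W2.card : ℝ) := by
    apply qf_single_set
    intro y hy
    obtain ⟨hyQ, hyu, hyv⟩ := hW2m y hy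
    obtain ⟨hqa, ⟨hq1, hq2, hq3⟩, ⟨hn1, hn2, hn3⟩, hnu, hnv⟩ := hQ y hyQ
    exact Tnon x3 y (Ne.symm hn3) (fun hh => hq3 hh.symm)
  have hE38 : ind {x3} ⬝ᵥ (T *ᵥ ind W3) = (1:ℝ) * (W3.card : ℝ) := by
    apply qf_single_set
    intro y hy
    obtain ⟨hyQ, hyu, hyv⟩ := hW3m y hy
    obtain ⟨hqa, ⟨hq1, hq2, hq3⟩, ⟨hn1, hn2, hn3⟩, hnu, hnv⟩ := hQ y hyQ
    exact Tnon x3 y (Ne.symm hn3) (fun hh => hq3 hh.symm)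
  have hE39 : ind {x3} ⬝ᵥ (T *ᵥ ind W4) = (1:ℝ) * (W4.card : ℝ) := by
    apply qf_single_set
    intro y hy
    obtain ⟨hyQ, hyu, hyv⟩ := hW4m y hy
    obtain ⟨hqa, ⟨hq1, hq2, hq3⟩, ⟨hn1, hn2, hn3⟩, hnu, hnv⟩ := hQ y hyQ
    exact Tnon x3 y (Ne.symm hn3) (fun hh => hq3 hh.symm)
  have hE40 : ind {u} ⬝ᵥ (T *ᵥ ind {x0}) = (1:ℝ) := by rw [qf_single]; exact Tnon u x0 hneux0 hnux0
  have hE41 : ind {u} ⬝ᵥ (T *ᵥ ind {x1}) = (-1:ℝ) := by rw [qf_single]; exact Tadj u x1 hux1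
  have hE42 : ind {u} ⬝ᵥ (T *ᵥ ind {x2}) = (1:ℝ) := by rw [qf_single]; exact Tnon u x2 hneux2 hnux2
  have hE43 : ind {u} ⬝ᵥ (T *ᵥ ind {x3}) = (1:ℝ) := by rw [qf_single]; exact Tnon u x3 hneux3 hnux3
  have hE44 : ind {u} ⬝ᵥ (T *ᵥ ind {u}) = (0:ℝ) := by rw [qf_single]; exact Tdiag u
  have hE45 : ind {u} ⬝ᵥ (T *ᵥ ind {v}) = (-1:ℝ) := by rw [qf_single]; exact Tadj u v huv
  have hE46 : ind {u} ⬝ᵥ (T *ᵥ ind W1) = (1:ℝ) * (W1.card : ℝ) := by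
    apply qf_single_set
    intro y hy
    obtain ⟨hyQ, hyu, hyv⟩ := hW1m y hy
    obtain ⟨hqa, ⟨hq1, hq2, hq3⟩, ⟨hn1, hn2, hn3⟩, hnu, hnv⟩ := hQ y hyQ
    exact Tnon u y (Ne.symm hnu) (fun hh => hyu hh.symm)
  have hE47 : ind {u} ⬝ᵥ (T *ᵥ ind W2) = (1:ℝ) * (W2.card : ℝ) := by
    apply qf_single_set
    intro y hy
    obtain ⟨hyQ, hyu, hyv⟩ := hW2m y hy
    obtain ⟨hqa, ⟨hq1, hq2, hq3⟩, ⟨hn1, hn2, hn3⟩, hnu, hnv⟩ := hQ y hyQ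
    exact Tnon u y (Ne.symm hnu) (fun hh => hyu hh.symm)
  have hE48 : ind {u} ⬝ᵥ (T *ᵥ ind W3) = (-1:ℝ) * (W3.card : ℝ) := by
    apply qf_single_set
    intro y hy
    obtain ⟨hyQ, hyu, hyv⟩ := hW3m y hy
    obtain ⟨hqa, ⟨hq1, hq2, hq3⟩, ⟨hn1, hn2, hn3⟩, hnu, hnv⟩ := hQ y hyQ
    exact Tadj u y hyu.symm
  have hE49 : ind {u} ⬝ᵥ (T *ᵥ ind W4) = (-1:ℝ) * (W4.card : ℝ) := by
    apply qf_single_set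
    intro y hy
    obtain ⟨hyQ, hyu, hyv⟩ := hW4m y hy
    obtain ⟨hqa, ⟨hq1, hq2, hq3⟩, ⟨hn1, hn2, hn3⟩, hnu, hnv⟩ := hQ y hyQ
    exact Tadj u y hyu.symm
  have hE50 : ind {v} ⬝ᵥ (T *ᵥ ind {x0}) = (1:ℝ) := by rw [qf_single]; exact Tnon v x0 hnevx0 hnvx0
  have hE51 : ind {v} ⬝ᵥ (T *ᵥ ind {x1}) = (1:ℝ) := by rw [qf_single]; exact Tnon v x1 hnevx1 hnvx1
  have hE52 : ind {v} ⬝ᵥ (T *ᵥ ind {x2}) = (-1:ℝ) := by rw [qf_single]; exact Tadj v x2 hvx2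
  have hE53 : ind {v} ⬝ᵥ (T *ᵥ ind {x3}) = (1:ℝ) := by rw [qf_single]; exact Tnon v x3 hnevx3 hnvx3
  have hE54 : ind {v} ⬝ᵥ (T *ᵥ ind {u}) = (-1:ℝ) := by rw [qf_single]; exact Tadj v u huv.symm
  have hE55 : ind {v} ⬝ᵥ (T *ᵥ ind {v}) = (0:ℝ) := by rw [qf_single]; exact Tdiag v
  have hE56 : ind {v} ⬝ᵥ (T *ᵥ ind W1) = (1:ℝ) * (W1.card : ℝ) := by
    apply qf_single_set
    intro y hy
    obtain ⟨hyQ, hyu, hyv⟩ := hW1m y hy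
    obtain ⟨hqa, ⟨hq1, hq2, hq3⟩, ⟨hn1, hn2, hn3⟩, hnu, hnv⟩ := hQ y hyQ
    exact Tnon v y (Ne.symm hnv) (fun hh => hyv hh.symm)
  have hE57 : ind {v} ⬝ᵥ (T *ᵥ ind W2) = (-1:ℝ) * (W2.card : ℝ) := by
    apply qf_single_set
    intro y hy
    obtain ⟨hyQ, hyu, hyv⟩ := hW2m y hy
    obtain ⟨hqa, ⟨hq1, hq2, hq3⟩, ⟨hn1, hn2, hn3⟩, hnu, hnv⟩ := hQ y hyQ
    exact Tadj v y hyv.symm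
  have hE58 : ind {v} ⬝ᵥ (T *ᵥ ind W3) = (1:ℝ) * (W3.card : ℝ) := by
    apply qf_single_set
    intro y hy
    obtain ⟨hyQ, hyu, hyv⟩ := hW3m y hy
    obtain ⟨hqa, ⟨hq1, hq2, hq3⟩, ⟨hn1, hn2, hn3⟩, hnu, hnv⟩ := hQ y hyQ
    exact Tnon v y (Ne.symm hnv) (fun hh => hyv hh.symm)
  have hE59 : ind {v} ⬝ᵥ (T *ᵥ ind W4) = (-1:ℝ) * (W4.card : ℝ) := by
    apply qf_single_set
    intro y hy
    obtain ⟨hyQ, hyu, hyv⟩ := hW4m y hy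
    obtain ⟨hqa, ⟨hq1, hq2, hq3⟩, ⟨hn1, hn2, hn3⟩, hnu, hnv⟩ := hQ y hyQ
    exact Tadj v y hyv.symm
  have hE60 : ind W1 ⬝ᵥ (T *ᵥ ind {x0}) = (-1:ℝ) * (W1.card : ℝ) := by
    apply qf_set_single
    intro y hy
    obtain ⟨hyQ, hyu, hyv⟩ := hW1m y hy
    obtain ⟨hqa, ⟨hq1, hq2, hq3⟩, ⟨hn1, hn2, hn3⟩, hnu, hnv⟩ := hQ y hyQ
    exact Tadj y x0 hqa
  have hE61 : ind W1 ⬝ᵥ (T *ᵥ ind {x1}) = (1:ℝ) * (W1.card : ℝ) := by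
    apply qf_set_single
    intro y hy
    obtain ⟨hyQ, hyu, hyv⟩ := hW1m y hy
    obtain ⟨hqa, ⟨hq1, hq2, hq3⟩, ⟨hn1, hn2, hn3⟩, hnu, hnv⟩ := hQ y hyQ
    exact Tnon y x1 hn1 hq1
  have hE62 : ind W1 ⬝ᵥ (T *ᵥ ind {x2}) = (1:ℝ) * (W1.card : ℝ) := by
    apply qf_set_single
    intro y hy
    obtain ⟨hyQ, hyu, hyv⟩ := hW1m y hy
    obtain ⟨hqa, ⟨hq1, hq2, hq3⟩, ⟨hn1, hn2, hn3⟩, hnu, hnv⟩ := hQ y hyQ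
    exact Tnon y x2 hn2 hq2
  have hE63 : ind W1 ⬝ᵥ (T *ᵥ ind {x3}) = (1:ℝ) * (W1.card : ℝ) := by
    apply qf_set_single
    intro y hy
    obtain ⟨hyQ, hyu, hyv⟩ := hW1m y hy
    obtain ⟨hqa, ⟨hq1, hq2, hq3⟩, ⟨hn1, hn2, hn3⟩, hnu, hnv⟩ := hQ y hyQ
    exact Tnon y x3 hn3 hq3
  have hE64 : ind W1 ⬝ᵥ (T *ᵥ ind {u}) = (1:ℝ) * (W1.card : ℝ) := by
    apply qf_set_single
    intro y hy
    obtain ⟨hyQ, hyu, hyv⟩ := hW1m y hy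
    obtain ⟨hqa, ⟨hq1, hq2, hq3⟩, ⟨hn1, hn2, hn3⟩, hnu, hnv⟩ := hQ y hyQ
    exact Tnon y u hnu hyu
  have hE65 : ind W1 ⬝ᵥ (T *ᵥ ind {v}) = (1:ℝ) * (W1.card : ℝ) := by
    apply qf_set_single
    intro y hy
    obtain ⟨hyQ, hyu, hyv⟩ := hW1m y hy
    obtain ⟨hqa, ⟨hq1, hq2, hq3⟩, ⟨hn1, hn2, hn3⟩, hnu, hnv⟩ := hQ y hyQ
    exact Tnon y v hnv hyv
  have hE66 : ind W1 ⬝ᵥ (T *ᵥ ind W1) = (W1.card : ℝ) * (W1.card : ℝ) - (W1.card : ℝ) := by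
    apply qf_set_self
    · intro y hy; exact Tdiag y
    · intro y hy z hz hyz
      exact Tnon y z hyz (hindep y (hW1m y hy).1 z (hW1m z hz).1 hyz)
  have hE67 : ind W1 ⬝ᵥ (T *ᵥ ind W2) = (1:ℝ) * (W1.card : ℝ) * (W2.card : ℝ) := by
    apply qf_set_set
    intro y hy z hz
    have hyz : y ≠ z := fun hh => Finset.disjoint_left.mp hdis12 hy (hh ▸ hz)
    exact Tnon y z hyz (hindep y (hW1m y hy).1 z (hW2m z hz).1 hyz)
  have hE68 : ind W1 ⬝ᵥ (T *ᵥ ind W3) = (1:ℝ) * (W1.card : ℝ) * (W3.card : ℝ) := by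
    apply qf_set_set
    intro y hy z hz
    have hyz : y ≠ z := fun hh => Finset.disjoint_left.mp hdis13 hy (hh ▸ hz)
    exact Tnon y z hyz (hindep y (hW1m y hy).1 z (hW3m z hz).1 hyz)
  have hE69 : ind W1 ⬝ᵥ (T *ᵥ ind W4) = (1:ℝ) * (W1.card : ℝ) * (W4.card : ℝ) := by
    apply qf_set_set
    intro y hy z hz
    have hyz : y ≠ z := fun hh => Finset.disjoint_left.mp hdis14 hy (hh ▸ hz)
    exact Tnon y z hyz (hindep y (hW1m y hy).1 z (hW4m z hz).1 hyz)
  have hE70 : ind W2 ⬝ᵥ (T *ᵥ ind {x0}) = (-1:ℝ) * (W2.card : ℝ) := by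
    apply qf_set_single
    intro y hy
    obtain ⟨hyQ, hyu, hyv⟩ := hW2m y hy
    obtain ⟨hqa, ⟨hq1, hq2, hq3⟩, ⟨hn1, hn2, hn3⟩, hnu, hnv⟩ := hQ y hyQ
    exact Tadj y x0 hqa
  have hE71 : ind W2 ⬝ᵥ (T *ᵥ ind {x1}) = (1:ℝ) * (W2.card : ℝ) := by
    apply qf_set_single
    intro y hy
    obtain ⟨hyQ, hyu, hyv⟩ := hW2m y hy
    obtain ⟨hqa, ⟨hq1, hq2, hq3⟩, ⟨hn1, hn2, hn3⟩, hnu, hnv⟩ := hQ y hyQ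
    exact Tnon y x1 hn1 hq1
  have hE72 : ind W2 ⬝ᵥ (T *ᵥ ind {x2}) = (1:ℝ) * (W2.card : ℝ) := by
    apply qf_set_single
    intro y hy
    obtain ⟨hyQ, hyu, hyv⟩ := hW2m y hy
    obtain ⟨hqa, ⟨hq1, hq2, hq3⟩, ⟨hn1, hn2, hn3⟩, hnu, hnv⟩ := hQ y hyQ
    exact Tnon y x2 hn2 hq2
  have hE73 : ind W2 ⬝ᵥ (T *ᵥ ind {x3}) = (1:ℝ) * (W2.card : ℝ) := by
    apply qf_set_single
    intro y hy
    obtain ⟨hyQ, hyu, hyv⟩ := hW2m y hy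
    obtain ⟨hqa, ⟨hq1, hq2, hq3⟩, ⟨hn1, hn2, hn3⟩, hnu, hnv⟩ := hQ y hyQ
    exact Tnon y x3 hn3 hq3
  have hE74 : ind W2 ⬝ᵥ (T *ᵥ ind {u}) = (1:ℝ) * (W2.card : ℝ) := by
    apply qf_set_single
    intro y hy
    obtain ⟨hyQ, hyu, hyv⟩ := hW2m y hy
    obtain ⟨hqa, ⟨hq1, hq2, hq3⟩, ⟨hn1, hn2, hn3⟩, hnu, hnv⟩ := hQ y hyQ
    exact Tnon y u hnu hyu
  have hE75 : ind W2 ⬝ᵥ (T *ᵥ ind {v}) = (-1:ℝ) * (W2.card : ℝ) := by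
    apply qf_set_single
    intro y hy
    obtain ⟨hyQ, hyu, hyv⟩ := hW2m y hy
    obtain ⟨hqa, ⟨hq1, hq2, hq3⟩, ⟨hn1, hn2, hn3⟩, hnu, hnv⟩ := hQ y hyQ
    exact Tadj y v hyv
  have hE76 : ind W2 ⬝ᵥ (T *ᵥ ind W1) = (1:ℝ) * (W2.card : ℝ) * (W1.card : ℝ) := by
    apply qf_set_set
    intro y hy z hz
    have hyz : y ≠ z := fun hh => Finset.disjoint_left.mp hdis12.symm hy (hh ▸ hz)
    exact Tnon y z hyz (hindep y (hW2m y hy).1 z (hW1m z hz).1 hyz)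
  have hE77 : ind W2 ⬝ᵥ (T *ᵥ ind W2) = (W2.card : ℝ) * (W2.card : ℝ) - (W2.card : ℝ) := by
    apply qf_set_self
    · intro y hy; exact Tdiag y
    · intro y hy z hz hyz
      exact Tnon y z hyz (hindep y (hW2m y hy).1 z (hW2m z hz).1 hyz)
  have hE78 : ind W2 ⬝ᵥ (T *ᵥ ind W3) = (1:ℝ) * (W2.card : ℝ) * (W3.card : ℝ) := by
    apply qf_set_set
    intro y hy z hz
    have hyz : y ≠ z := fun hh => Finset.disjoint_left.mp hdis23 hy (hh ▸ hz)
    exact Tnon y z hyz (hindep y (hW2m y hy).1 z (hW3m z hz).1 hyz)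
  have hE79 : ind W2 ⬝ᵥ (T *ᵥ ind W4) = (1:ℝ) * (W2.card : ℝ) * (W4.card : ℝ) := by
    apply qf_set_set
    intro y hy z hz
    have hyz : y ≠ z := fun hh => Finset.disjoint_left.mp hdis24 hy (hh ▸ hz)
    exact Tnon y z hyz (hindep y (hW2m y hy).1 z (hW4m z hz).1 hyz)
  have hE80 : ind W3 ⬝ᵥ (T *ᵥ ind {x0}) = (-1:ℝ) * (W3.card : ℝ) := by
    apply qf_set_single
    intro y hy
    obtain ⟨hyQ, hyu, hyv⟩ := hW3m y hy
    obtain ⟨hqa, ⟨hq1, hq2, hq3⟩, ⟨hn1, hn2, hn3⟩, hnu, hnv⟩ := hQ y hyQ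
    exact Tadj y x0 hqa
  have hE81 : ind W3 ⬝ᵥ (T *ᵥ ind {x1}) = (1:ℝ) * (W3.card : ℝ) := by
    apply qf_set_single
    intro y hy
    obtain ⟨hyQ, hyu, hyv⟩ := hW3m y hy
    obtain ⟨hqa, ⟨hq1, hq2, hq3⟩, ⟨hn1, hn2, hn3⟩, hnu, hnv⟩ := hQ y hyQ
    exact Tnon y x1 hn1 hq1
  have hE82 : ind W3 ⬝ᵥ (T *ᵥ ind {x2}) = (1:ℝ) * (W3.card : ℝ) := by
    apply qf_set_single
    intro y hy
    obtain ⟨hyQ, hyu, hyv⟩ := hW3m y hy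
    obtain ⟨hqa, ⟨hq1, hq2, hq3⟩, ⟨hn1, hn2, hn3⟩, hnu, hnv⟩ := hQ y hyQ
    exact Tnon y x2 hn2 hq2
  have hE83 : ind W3 ⬝ᵥ (T *ᵥ ind {x3}) = (1:ℝ) * (W3.card : ℝ) := by
    apply qf_set_single
    intro y hy
    obtain ⟨hyQ, hyu, hyv⟩ := hW3m y hy
    obtain ⟨hqa, ⟨hq1, hq2, hq3⟩, ⟨hn1, hn2, hn3⟩, hnu, hnv⟩ := hQ y hyQ
    exact Tnon y x3 hn3 hq3
  have hE84 : ind W3 ⬝ᵥ (T *ᵥ ind {u}) = (-1:ℝ) * (W3.card : ℝ) := by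
    apply qf_set_single
    intro y hy
    obtain ⟨hyQ, hyu, hyv⟩ := hW3m y hy
    obtain ⟨hqa, ⟨hq1, hq2, hq3⟩, ⟨hn1, hn2, hn3⟩, hnu, hnv⟩ := hQ y hyQ
    exact Tadj y u hyu
  have hE85 : ind W3 ⬝ᵥ (T *ᵥ ind {v}) = (1:ℝ) * (W3.card : ℝ) := by
    apply qf_set_single
    intro y hy
    obtain ⟨hyQ, hyu, hyv⟩ := hW3m y hy
    obtain ⟨hqa, ⟨hq1, hq2, hq3⟩, ⟨hn1, hn2, hn3⟩, hnu, hnv⟩ := hQ y hyQ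
    exact Tnon y v hnv hyv
  have hE86 : ind W3 ⬝ᵥ (T *ᵥ ind W1) = (1:ℝ) * (W3.card : ℝ) * (W1.card : ℝ) := by
    apply qf_set_set
    intro y hy z hz
    have hyz : y ≠ z := fun hh => Finset.disjoint_left.mp hdis13.symm hy (hh ▸ hz)
    exact Tnon y z hyz (hindep y (hW3m y hy).1 z (hW1m z hz).1 hyz)
  have hE87 : ind W3 ⬝ᵥ (T *ᵥ ind W2) = (1:ℝ) * (W3.card : ℝ) * (W2.card : ℝ) := by
    apply qf_set_set
    intro y hy z hz
    have hyz : y ≠ z := fun hh => Finset.disjoint_left.mp hdis23.symm hy (hh ▸ hz)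
    exact Tnon y z hyz (hindep y (hW3m y hy).1 z (hW2m z hz).1 hyz)
  have hE88 : ind W3 ⬝ᵥ (T *ᵥ ind W3) = (W3.card : ℝ) * (W3.card : ℝ) - (W3.card : ℝ) := by
    apply qf_set_self
    · intro y hy; exact Tdiag y
    · intro y hy z hz hyz
      exact Tnon y z hyz (hindep y (hW3m y hy).1 z (hW3m z hz).1 hyz)
  have hE89 : ind W3 ⬝ᵥ (T *ᵥ ind W4) = (1:ℝ) * (W3.card : ℝ) * (W4.card : ℝ) := by
    apply qf_set_set
    intro y hy z hz
    have hyz : y ≠ z := fun hh => Finset.disjoint_left.mp hdis34 hy (hh ▸ hz)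
    exact Tnon y z hyz (hindep y (hW3m y hy).1 z (hW4m z hz).1 hyz)
  have hE90 : ind W4 ⬝ᵥ (T *ᵥ ind {x0}) = (-1:ℝ) * (W4.card : ℝ) := by
    apply qf_set_single
    intro y hy
    obtain ⟨hyQ, hyu, hyv⟩ := hW4m y hy
    obtain ⟨hqa, ⟨hq1, hq2, hq3⟩, ⟨hn1, hn2, hn3⟩, hnu, hnv⟩ := hQ y hyQ
    exact Tadj y x0 hqa
  have hE91 : ind W4 ⬝ᵥ (T *ᵥ ind {x1}) = (1:ℝ) * (W4.card : ℝ) := by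
    apply qf_set_single
    intro y hy
    obtain ⟨hyQ, hyu, hyv⟩ := hW4m y hy
    obtain ⟨hqa, ⟨hq1, hq2, hq3⟩, ⟨hn1, hn2, hn3⟩, hnu, hnv⟩ := hQ y hyQ
    exact Tnon y x1 hn1 hq1
  have hE92 : ind W4 ⬝ᵥ (T *ᵥ ind {x2}) = (1:ℝ) * (W4.card : ℝ) := by
    apply qf_set_single
    intro y hy
    obtain ⟨hyQ, hyu, hyv⟩ := hW4m y hy
    obtain ⟨hqa, ⟨hq1, hq2, hq3⟩, ⟨hn1, hn2, hn3⟩, hnu, hnv⟩ := hQ y hyQ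
    exact Tnon y x2 hn2 hq2
  have hE93 : ind W4 ⬝ᵥ (T *ᵥ ind {x3}) = (1:ℝ) * (W4.card : ℝ) := by
    apply qf_set_single
    intro y hy
    obtain ⟨hyQ, hyu, hyv⟩ := hW4m y hy
    obtain ⟨hqa, ⟨hq1, hq2, hq3⟩, ⟨hn1, hn2, hn3⟩, hnu, hnv⟩ := hQ y hyQ
    exact Tnon y x3 hn3 hq3
  have hE94 : ind W4 ⬝ᵥ (T *ᵥ ind {u}) = (-1:ℝ) * (W4.card : ℝ) := by
    apply qf_set_single
    intro y hy
    obtain ⟨hyQ, hyu, hyv⟩ := hW4m y hy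
    obtain ⟨hqa, ⟨hq1, hq2, hq3⟩, ⟨hn1, hn2, hn3⟩, hnu, hnv⟩ := hQ y hyQ
    exact Tadj y u hyu
  have hE95 : ind W4 ⬝ᵥ (T *ᵥ ind {v}) = (-1:ℝ) * (W4.card : ℝ) := by
    apply qf_set_single
    intro y hy
    obtain ⟨hyQ, hyu, hyv⟩ := hW4m y hy
    obtain ⟨hqa, ⟨hq1, hq2, hq3⟩, ⟨hn1, hn2, hn3⟩, hnu, hnv⟩ := hQ y hyQ
    exact Tadj y v hyv
  have hE96 : ind W4 ⬝ᵥ (T *ᵥ ind W1) = (1:ℝ) * (W4.card : ℝ) * (W1.card : ℝ) := by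
    apply qf_set_set
    intro y hy z hz
    have hyz : y ≠ z := fun hh => Finset.disjoint_left.mp hdis14.symm hy (hh ▸ hz)
    exact Tnon y z hyz (hindep y (hW4m y hy).1 z (hW1m z hz).1 hyz)
  have hE97 : ind W4 ⬝ᵥ (T *ᵥ ind W2) = (1:ℝ) * (W4.card : ℝ) * (W2.card : ℝ) := by
    apply qf_set_set
    intro y hy z hz
    have hyz : y ≠ z := fun hh => Finset.disjoint_left.mp hdis24.symm hy (hh ▸ hz)
    exact Tnon y z hyz (hindep y (hW4m y hy).1 z (hW2m z hz).1 hyz)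
  have hE98 : ind W4 ⬝ᵥ (T *ᵥ ind W3) = (1:ℝ) * (W4.card : ℝ) * (W3.card : ℝ) := by
    apply qf_set_set
    intro y hy z hz
    have hyz : y ≠ z := fun hh => Finset.disjoint_left.mp hdis34.symm hy (hh ▸ hz)
    exact Tnon y z hyz (hindep y (hW4m y hy).1 z (hW3m z hz).1 hyz)
  have hE99 : ind W4 ⬝ᵥ (T *ᵥ ind W4) = (W4.card : ℝ) * (W4.card : ℝ) - (W4.card : ℝ) := by
    apply qf_set_self
    · intro y hy; exact Tdiag y
    · intro y hy z hz hyz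
      exact Tnon y z hyz (hindep y (hW4m y hy).1 z (hW4m z hz).1 hyz)
  have hD00 : ind {x0} ⬝ᵥ ind {x0} = (1:ℝ) := dot_ind_single_self x0
  have hD01 : ind {x0} ⬝ᵥ ind {x1} = (0:ℝ) := dot_ind_single x0 x1 (hx01.ne)
  have hD02 : ind {x0} ⬝ᵥ ind {x2} = (0:ℝ) := dot_ind_single x0 x2 (hx02.ne)
  have hD03 : ind {x0} ⬝ᵥ ind {x3} = (0:ℝ) := dot_ind_single x0 x3 (hx03.ne)
  have hD04 : ind {x0} ⬝ᵥ ind {u} = (0:ℝ) := dot_ind_single x0 u ((Ne.symm hneux0))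
  have hD05 : ind {x0} ⬝ᵥ ind {v} = (0:ℝ) := dot_ind_single x0 v ((Ne.symm hnevx0))
  have hD06 : ind {x0} ⬝ᵥ ind W1 = (0:ℝ) := dot_ind_disj (Finset.disjoint_singleton_left.mpr (fun h => G.loopless.irrefl x0 (hQ x0 (hW1m x0 h).1).1))
  have hD07 : ind {x0} ⬝ᵥ ind W2 = (0:ℝ) := dot_ind_disj (Finset.disjoint_singleton_left.mpr (fun h => G.loopless.irrefl x0 (hQ x0 (hW2m x0 h).1).1))
  have hD08 : ind {x0} ⬝ᵥ ind W3 = (0:ℝ) := dot_ind_disj (Finset.disjoint_singleton_left.mpr (fun h => G.loopless.irrefl x0 (hQ x0 (hW3m x0 h).1).1))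
  have hD09 : ind {x0} ⬝ᵥ ind W4 = (0:ℝ) := dot_ind_disj (Finset.disjoint_singleton_left.mpr (fun h => G.loopless.irrefl x0 (hQ x0 (hW4m x0 h).1).1))
  have hD10 : ind {x1} ⬝ᵥ ind {x0} = (0:ℝ) := dot_ind_single x1 x0 (hx01.ne')
  have hD11 : ind {x1} ⬝ᵥ ind {x1} = (1:ℝ) := dot_ind_single_self x1
  have hD12 : ind {x1} ⬝ᵥ ind {x2} = (0:ℝ) := dot_ind_single x1 x2 (hx12.ne)
  have hD13 : ind {x1} ⬝ᵥ ind {x3} = (0:ℝ) := dot_ind_single x1 x3 (hx13.ne)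
  have hD14 : ind {x1} ⬝ᵥ ind {u} = (0:ℝ) := dot_ind_single x1 u (hux1.ne')
  have hD15 : ind {x1} ⬝ᵥ ind {v} = (0:ℝ) := dot_ind_single x1 v ((Ne.symm hnevx1))
  have hD16 : ind {x1} ⬝ᵥ ind W1 = (0:ℝ) := dot_ind_disj (Finset.disjoint_singleton_left.mpr (fun h => (hQ x1 (hW1m x1 h).1).2.2.1.1 rfl))
  have hD17 : ind {x1} ⬝ᵥ ind W2 = (0:ℝ) := dot_ind_disj (Finset.disjoint_singleton_left.mpr (fun h => (hQ x1 (hW2m x1 h).1).2.2.1.1 rfl))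
  have hD18 : ind {x1} ⬝ᵥ ind W3 = (0:ℝ) := dot_ind_disj (Finset.disjoint_singleton_left.mpr (fun h => (hQ x1 (hW3m x1 h).1).2.2.1.1 rfl))
  have hD19 : ind {x1} ⬝ᵥ ind W4 = (0:ℝ) := dot_ind_disj (Finset.disjoint_singleton_left.mpr (fun h => (hQ x1 (hW4m x1 h).1).2.2.1.1 rfl))
  have hD20 : ind {x2} ⬝ᵥ ind {x0} = (0:ℝ) := dot_ind_single x2 x0 (hx02.ne')
  have hD21 : ind {x2} ⬝ᵥ ind {x1} = (0:ℝ) := dot_ind_single x2 x1 (hx12.ne')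
  have hD22 : ind {x2} ⬝ᵥ ind {x2} = (1:ℝ) := dot_ind_single_self x2
  have hD23 : ind {x2} ⬝ᵥ ind {x3} = (0:ℝ) := dot_ind_single x2 x3 (hx23.ne)
  have hD24 : ind {x2} ⬝ᵥ ind {u} = (0:ℝ) := dot_ind_single x2 u ((Ne.symm hneux2))
  have hD25 : ind {x2} ⬝ᵥ ind {v} = (0:ℝ) := dot_ind_single x2 v (hvx2.ne')
  have hD26 : ind {x2} ⬝ᵥ ind W1 = (0:ℝ) := dot_ind_disj (Finset.disjoint_singleton_left.mpr (fun h => (hQ x2 (hW1m x2 h).1).2.2.1.2.1 rfl))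
  have hD27 : ind {x2} ⬝ᵥ ind W2 = (0:ℝ) := dot_ind_disj (Finset.disjoint_singleton_left.mpr (fun h => (hQ x2 (hW2m x2 h).1).2.2.1.2.1 rfl))
  have hD28 : ind {x2} ⬝ᵥ ind W3 = (0:ℝ) := dot_ind_disj (Finset.disjoint_singleton_left.mpr (fun h => (hQ x2 (hW3m x2 h).1).2.2.1.2.1 rfl))
  have hD29 : ind {x2} ⬝ᵥ ind W4 = (0:ℝ) := dot_ind_disj (Finset.disjoint_singleton_left.mpr (fun h => (hQ x2 (hW4m x2 h).1).2.2.1.2.1 rfl))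
  have hD30 : ind {x3} ⬝ᵥ ind {x0} = (0:ℝ) := dot_ind_single x3 x0 (hx03.ne')
  have hD31 : ind {x3} ⬝ᵥ ind {x1} = (0:ℝ) := dot_ind_single x3 x1 (hx13.ne')
  have hD32 : ind {x3} ⬝ᵥ ind {x2} = (0:ℝ) := dot_ind_single x3 x2 (hx23.ne')
  have hD33 : ind {x3} ⬝ᵥ ind {x3} = (1:ℝ) := dot_ind_single_self x3
  have hD34 : ind {x3} ⬝ᵥ ind {u} = (0:ℝ) := dot_ind_single x3 u ((Ne.symm hneux3))
  have hD35 : ind {x3} ⬝ᵥ ind {v} = (0:ℝ) := dot_ind_single x3 v ((Ne.symm hnevx3))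
  have hD36 : ind {x3} ⬝ᵥ ind W1 = (0:ℝ) := dot_ind_disj (Finset.disjoint_singleton_left.mpr (fun h => (hQ x3 (hW1m x3 h).1).2.2.1.2.2 rfl))
  have hD37 : ind {x3} ⬝ᵥ ind W2 = (0:ℝ) := dot_ind_disj (Finset.disjoint_singleton_left.mpr (fun h => (hQ x3 (hW2m x3 h).1).2.2.1.2.2 rfl))
  have hD38 : ind {x3} ⬝ᵥ ind W3 = (0:ℝ) := dot_ind_disj (Finset.disjoint_singleton_left.mpr (fun h => (hQ x3 (hW3m x3 h).1).2.2.1.2.2 rfl))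
  have hD39 : ind {x3} ⬝ᵥ ind W4 = (0:ℝ) := dot_ind_disj (Finset.disjoint_singleton_left.mpr (fun h => (hQ x3 (hW4m x3 h).1).2.2.1.2.2 rfl))
  have hD40 : ind {u} ⬝ᵥ ind {x0} = (0:ℝ) := dot_ind_single u x0 (hneux0)
  have hD41 : ind {u} ⬝ᵥ ind {x1} = (0:ℝ) := dot_ind_single u x1 (hux1.ne)
  have hD42 : ind {u} ⬝ᵥ ind {x2} = (0:ℝ) := dot_ind_single u x2 (hneux2)
  have hD43 : ind {u} ⬝ᵥ ind {x3} = (0:ℝ) := dot_ind_single u x3 (hneux3)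
  have hD44 : ind {u} ⬝ᵥ ind {u} = (1:ℝ) := dot_ind_single_self u
  have hD45 : ind {u} ⬝ᵥ ind {v} = (0:ℝ) := dot_ind_single u v (huv.ne)
  have hD46 : ind {u} ⬝ᵥ ind W1 = (0:ℝ) := dot_ind_disj (Finset.disjoint_singleton_left.mpr (fun h => (hQ u (hW1m u h).1).2.2.2.1 rfl))
  have hD47 : ind {u} ⬝ᵥ ind W2 = (0:ℝ) := dot_ind_disj (Finset.disjoint_singleton_left.mpr (fun h => (hQ u (hW2m u h).1).2.2.2.1 rfl))
  have hD48 : ind {u} ⬝ᵥ ind W3 = (0:ℝ) := dot_ind_disj (Finset.disjoint_singleton_left.mpr (fun h => (hQ u (hW3m u h).1).2.2.2.1 rfl))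
  have hD49 : ind {u} ⬝ᵥ ind W4 = (0:ℝ) := dot_ind_disj (Finset.disjoint_singleton_left.mpr (fun h => (hQ u (hW4m u h).1).2.2.2.1 rfl))
  have hD50 : ind {v} ⬝ᵥ ind {x0} = (0:ℝ) := dot_ind_single v x0 (hnevx0)
  have hD51 : ind {v} ⬝ᵥ ind {x1} = (0:ℝ) := dot_ind_single v x1 (hnevx1)
  have hD52 : ind {v} ⬝ᵥ ind {x2} = (0:ℝ) := dot_ind_single v x2 (hvx2.ne)
  have hD53 : ind {v} ⬝ᵥ ind {x3} = (0:ℝ) := dot_ind_single v x3 (hnevx3)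
  have hD54 : ind {v} ⬝ᵥ ind {u} = (0:ℝ) := dot_ind_single v u (huv.ne')
  have hD55 : ind {v} ⬝ᵥ ind {v} = (1:ℝ) := dot_ind_single_self v
  have hD56 : ind {v} ⬝ᵥ ind W1 = (0:ℝ) := dot_ind_disj (Finset.disjoint_singleton_left.mpr (fun h => (hQ v (hW1m v h).1).2.2.2.2 rfl))
  have hD57 : ind {v} ⬝ᵥ ind W2 = (0:ℝ) := dot_ind_disj (Finset.disjoint_singleton_left.mpr (fun h => (hQ v (hW2m v h).1).2.2.2.2 rfl))
  have hD58 : ind {v} ⬝ᵥ ind W3 = (0:ℝ) := dot_ind_disj (Finset.disjoint_singleton_left.mpr (fun h => (hQ v (hW3m v h).1).2.2.2.2 rfl))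
  have hD59 : ind {v} ⬝ᵥ ind W4 = (0:ℝ) := dot_ind_disj (Finset.disjoint_singleton_left.mpr (fun h => (hQ v (hW4m v h).1).2.2.2.2 rfl))
  have hD60 : ind W1 ⬝ᵥ ind {x0} = (0:ℝ) := dot_ind_disj (Finset.disjoint_singleton_right.mpr (fun h => G.loopless.irrefl x0 (hQ x0 (hW1m x0 h).1).1))
  have hD61 : ind W1 ⬝ᵥ ind {x1} = (0:ℝ) := dot_ind_disj (Finset.disjoint_singleton_right.mpr (fun h => (hQ x1 (hW1m x1 h).1).2.2.1.1 rfl))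
  have hD62 : ind W1 ⬝ᵥ ind {x2} = (0:ℝ) := dot_ind_disj (Finset.disjoint_singleton_right.mpr (fun h => (hQ x2 (hW1m x2 h).1).2.2.1.2.1 rfl))
  have hD63 : ind W1 ⬝ᵥ ind {x3} = (0:ℝ) := dot_ind_disj (Finset.disjoint_singleton_right.mpr (fun h => (hQ x3 (hW1m x3 h).1).2.2.1.2.2 rfl))
  have hD64 : ind W1 ⬝ᵥ ind {u} = (0:ℝ) := dot_ind_disj (Finset.disjoint_singleton_right.mpr (fun h => (hQ u (hW1m u h).1).2.2.2.1 rfl))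
  have hD65 : ind W1 ⬝ᵥ ind {v} = (0:ℝ) := dot_ind_disj (Finset.disjoint_singleton_right.mpr (fun h => (hQ v (hW1m v h).1).2.2.2.2 rfl))
  have hD66 : ind W1 ⬝ᵥ ind W1 = (W1.card : ℝ) := dot_ind_self
  have hD67 : ind W1 ⬝ᵥ ind W2 = (0:ℝ) := dot_ind_disj hdis12
  have hD68 : ind W1 ⬝ᵥ ind W3 = (0:ℝ) := dot_ind_disj hdis13
  have hD69 : ind W1 ⬝ᵥ ind W4 = (0:ℝ) := dot_ind_disj hdis14
  have hD70 : ind W2 ⬝ᵥ ind {x0} = (0:ℝ) := dot_ind_disj (Finset.disjoint_singleton_right.mpr (fun h => G.loopless.irrefl x0 (hQ x0 (hW2m x0 h).1).1))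
  have hD71 : ind W2 ⬝ᵥ ind {x1} = (0:ℝ) := dot_ind_disj (Finset.disjoint_singleton_right.mpr (fun h => (hQ x1 (hW2m x1 h).1).2.2.1.1 rfl))
  have hD72 : ind W2 ⬝ᵥ ind {x2} = (0:ℝ) := dot_ind_disj (Finset.disjoint_singleton_right.mpr (fun h => (hQ x2 (hW2m x2 h).1).2.2.1.2.1 rfl))
  have hD73 : ind W2 ⬝ᵥ ind {x3} = (0:ℝ) := dot_ind_disj (Finset.disjoint_singleton_right.mpr (fun h => (hQ x3 (hW2m x3 h).1).2.2.1.2.2 rfl))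
  have hD74 : ind W2 ⬝ᵥ ind {u} = (0:ℝ) := dot_ind_disj (Finset.disjoint_singleton_right.mpr (fun h => (hQ u (hW2m u h).1).2.2.2.1 rfl))
  have hD75 : ind W2 ⬝ᵥ ind {v} = (0:ℝ) := dot_ind_disj (Finset.disjoint_singleton_right.mpr (fun h => (hQ v (hW2m v h).1).2.2.2.2 rfl))
  have hD76 : ind W2 ⬝ᵥ ind W1 = (0:ℝ) := dot_ind_disj hdis12.symm
  have hD77 : ind W2 ⬝ᵥ ind W2 = (W2.card : ℝ) := dot_ind_self
  have hD78 : ind W2 ⬝ᵥ ind W3 = (0:ℝ) := dot_ind_disj hdis23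
  have hD79 : ind W2 ⬝ᵥ ind W4 = (0:ℝ) := dot_ind_disj hdis24
  have hD80 : ind W3 ⬝ᵥ ind {x0} = (0:ℝ) := dot_ind_disj (Finset.disjoint_singleton_right.mpr (fun h => G.loopless.irrefl x0 (hQ x0 (hW3m x0 h).1).1))
  have hD81 : ind W3 ⬝ᵥ ind {x1} = (0:ℝ) := dot_ind_disj (Finset.disjoint_singleton_right.mpr (fun h => (hQ x1 (hW3m x1 h).1).2.2.1.1 rfl))
  have hD82 : ind W3 ⬝ᵥ ind {x2} = (0:ℝ) := dot_ind_disj (Finset.disjoint_singleton_right.mpr (fun h => (hQ x2 (hW3m x2 h).1).2.2.1.2.1 rfl))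
  have hD83 : ind W3 ⬝ᵥ ind {x3} = (0:ℝ) := dot_ind_disj (Finset.disjoint_singleton_right.mpr (fun h => (hQ x3 (hW3m x3 h).1).2.2.1.2.2 rfl))
  have hD84 : ind W3 ⬝ᵥ ind {u} = (0:ℝ) := dot_ind_disj (Finset.disjoint_singleton_right.mpr (fun h => (hQ u (hW3m u h).1).2.2.2.1 rfl))
  have hD85 : ind W3 ⬝ᵥ ind {v} = (0:ℝ) := dot_ind_disj (Finset.disjoint_singleton_right.mpr (fun h => (hQ v (hW3m v h).1).2.2.2.2 rfl))
  have hD86 : ind W3 ⬝ᵥ ind W1 = (0:ℝ) := dot_ind_disj hdis13.symm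
  have hD87 : ind W3 ⬝ᵥ ind W2 = (0:ℝ) := dot_ind_disj hdis23.symm
  have hD88 : ind W3 ⬝ᵥ ind W3 = (W3.card : ℝ) := dot_ind_self
  have hD89 : ind W3 ⬝ᵥ ind W4 = (0:ℝ) := dot_ind_disj hdis34
  have hD90 : ind W4 ⬝ᵥ ind {x0} = (0:ℝ) := dot_ind_disj (Finset.disjoint_singleton_right.mpr (fun h => G.loopless.irrefl x0 (hQ x0 (hW4m x0 h).1).1))
  have hD91 : ind W4 ⬝ᵥ ind {x1} = (0:ℝ) := dot_ind_disj (Finset.disjoint_singleton_right.mpr (fun h => (hQ x1 (hW4m x1 h).1).2.2.1.1 rfl))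
  have hD92 : ind W4 ⬝ᵥ ind {x2} = (0:ℝ) := dot_ind_disj (Finset.disjoint_singleton_right.mpr (fun h => (hQ x2 (hW4m x2 h).1).2.2.1.2.1 rfl))
  have hD93 : ind W4 ⬝ᵥ ind {x3} = (0:ℝ) := dot_ind_disj (Finset.disjoint_singleton_right.mpr (fun h => (hQ x3 (hW4m x3 h).1).2.2.1.2.2 rfl))
  have hD94 : ind W4 ⬝ᵥ ind {u} = (0:ℝ) := dot_ind_disj (Finset.disjoint_singleton_right.mpr (fun h => (hQ u (hW4m u h).1).2.2.2.1 rfl))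
  have hD95 : ind W4 ⬝ᵥ ind {v} = (0:ℝ) := dot_ind_disj (Finset.disjoint_singleton_right.mpr (fun h => (hQ v (hW4m v h).1).2.2.2.2 rfl))
  have hD96 : ind W4 ⬝ᵥ ind W1 = (0:ℝ) := dot_ind_disj hdis14.symm
  have hD97 : ind W4 ⬝ᵥ ind W2 = (0:ℝ) := dot_ind_disj hdis24.symm
  have hD98 : ind W4 ⬝ᵥ ind W3 = (0:ℝ) := dot_ind_disj hdis34.symm
  have hD99 : ind W4 ⬝ᵥ ind W4 = (W4.card : ℝ) := dot_ind_self
  have h0 := hpsd ((iA:ℝ) • ind {x0} + (iB1:ℝ) • ind {x1} + (iB2:ℝ) • ind {x2} + (iB3:ℝ) • ind {x3} + (iD:ℝ) • ind {u} + (iZ:ℝ) • ind {v} + (iT1:ℝ) • ind W1 + (iT2:ℝ) • ind W2 + (iT3:ℝ) • ind W3 + (iT4:ℝ) • ind W4)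
  have hexp : ((iA:ℝ) • ind {x0} + (iB1:ℝ) • ind {x1} + (iB2:ℝ) • ind {x2} + (iB3:ℝ) • ind {x3} + (iD:ℝ) • ind {u} + (iZ:ℝ) • ind {v} + (iT1:ℝ) • ind W1 + (iT2:ℝ) • ind W2 + (iT3:ℝ) • ind W3 + (iT4:ℝ) • ind W4) ⬝ᵥ (T *ᵥ ((iA:ℝ) • ind {x0} + (iB1:ℝ) • ind {x1} + (iB2:ℝ) • ind {x2} + (iB3:ℝ) • ind {x3} + (iD:ℝ) • ind {u} + (iZ:ℝ) • ind {v} + (iT1:ℝ) • ind W1 + (iT2:ℝ) • ind W2 + (iT3:ℝ) • ind W3 + (iT4:ℝ) • ind W4)) + 5 * (((iA:ℝ) • ind {x0} + (iB1:ℝ) • ind {x1} + (iB2:ℝ) • ind {x2} + (iB3:ℝ) • ind {x3} + (iD:ℝ) • ind {u} + (iZ:ℝ) • ind {v} + (iT1:ℝ) • ind W1 + (iT2:ℝ) • ind W2 + (iT3:ℝ) • ind W3 + (iT4:ℝ) • ind W4) ⬝ᵥ ((iA:ℝ) • ind {x0} + (iB1:ℝ) • ind {x1} + (iB2:ℝ)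 • ind {x2} + (iB3:ℝ) • ind {x3} + (iD:ℝ) • ind {u} + (iZ:ℝ) • ind {v} + (iT1:ℝ) • ind W1 + (iT2:ℝ) • ind W2 + (iT3:ℝ) • ind W3 + (iT4:ℝ) • ind W4))
      = ((Phi iA iB1 iB2 iB3 iD iZ iT1 iT2 iT3 iT4 (c1:ℤ) (c2:ℤ) (c3:ℤ) (c4:ℤ) : ℤ) : ℝ) := by
    simp only [mulVec_add, mulVec_smul, dotProduct_add, add_dotProduct, dotProduct_smul,
      smul_dotProduct, smul_eq_mul]
    rw [hW1card, hW2card, hW3card, hW4card] at *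
    simp only [hE00, hE01, hE02, hE03, hE04, hE05, hE06, hE07, hE08, hE09, hE10, hE11, hE12, hE13, hE14, hE15, hE16, hE17, hE18, hE19, hE20, hE21, hE22, hE23, hE24, hE25, hE26, hE27, hE28, hE29, hE30, hE31, hE32, hE33, hE34, hE35, hE36, hE37, hE38, hE39, hE40, hE41, hE42, hE43, hE44, hE45, hE46, hE47, hE48, hE49, hE50, hE51, hE52, hE53, hE54, hE55, hE56, hE57, hE58, hE59, hE60, hE61, hE62, hE63, hE64, hE65, hE66, hE67, hE68, hE69, hE70, hE71, hE72, hE73, hE74, hE75, hE76, hE77, hE78, hE79, hE80, hE81, hE82, hE83, hE84, hE85, hE86, hE87, hE88, hE89, hE90, hE91, hE92, hE93, hE94, hE95, hE96, hE97, hE98, hE99,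
      hD00, hD01, hD02, hD03, hD04, hD05, hD06, hD07, hD08, hD09, hD10, hD11, hD12, hD13, hD14, hD15, hD16, hD17, hD18, hD19, hD20, hD21, hD22, hD23, hD24, hD25, hD26, hD27, hD28, hD29, hD30, hD31, hD32, hD33, hD34, hD35, hD36, hD37, hD38, hD39, hD40, hD41, hD42, hD43, hD44, hD45, hD46, hD47, hD48, hD49, hD50, hD51, hD52, hD53, hD54, hD55, hD56, hD57, hD58, hD59, hD60, hD61, hD62, hD63, hD64, hD65, hD66, hD67, hD68, hD69, hD70, hD71, hD72, hD73, hD74, hD75, hD76, hD77, hD78, hD79, hD80, hD81, hD82, hD83, hD84, hD85, hD86, hD87, hD88, hD89, hD90, hD91, hD92, hD93, hD94, hD95, hD96, hD97, hD98, hD99]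
    simp only [Phi]
    push_cast
    ring
  rw [hexp] at h0
  have : (0:ℤ) ≤ Phi iA iB1 iB2 iB3 iD iZ iT1 iT2 iT3 iT4 (c1:ℤ) (c2:ℤ) (c3:ℤ) (c4:ℤ) := by
    exact_mod_cast h0
  omega

end SeidelAux

/-- Let `S` be a Seidel matrix with smallest eigenvalue exactly `-5` and
`ω([S]) = 4`, let `G` be a graph in the switching class of `S` containing a 4-clique
`x 0, x 1, x 2, x 3`, and let `P i` be the corresponding `(4,1)`-pillars. If some vertex of
`P 1` is adjacent to some vertex of `P 2`, then `|P 0| ≤ 19` and `|P 3| ≤ 19`. -/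
theorem stmt_16 {n : ℕ} (S : Matrix (Fin n) (Fin n) ℝ) (hS : IsSeidel S)
    (hmin : minEig S = -5)
    (hω : (switchGraph S).cliqueNum = 4)
    (G : SimpleGraph (Fin n)) (hsw : SwEquiv S (seidelOf G))
    (x : Fin 4 → Fin n) (hclique : ∀ i j, i ≠ j → G.Adj (x i) (x j))
    (P : Fin 4 → Set (Fin n))
    (hP : ∀ i, P i =
      {y | (∀ j, y ≠ x j) ∧ G.Adj y (x i) ∧ ∀ j, j ≠ i → ¬ G.Adj y (x j)})
    (u v : Fin n) (hu : u ∈ P 1) (hv : v ∈ P 2) (huv : G.Adj u v) :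
    (P 0).ncard ≤ 19 ∧ (P 3).ncard ≤ 19 := by

  obtain ⟨hSsymm, -, -⟩ := hS
  obtain ⟨ε, hε, hTd⟩ := hsw
  have hpsdT : ∀ w : Fin n → ℝ, 0 ≤ w ⬝ᵥ (seidelOf G *ᵥ w) + 5 * (w ⬝ᵥ w) :=
    sw_psd hε hTd (psd_of_minEig S hSsymm hmin)
  rw [hP 1] at hu
  rw [hP 2] at hv
  obtain ⟨hune, huadj, huno⟩ := hu
  obtain ⟨hvne, hvadj, hvno⟩ := hv
  constructor
  · apply key (seidelOf G) G rfl hpsdT (x 0) (x 1) (x 2) (x 3) u v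
      (hclique 0 1 (by decide)) (hclique 0 2 (by decide)) (hclique 0 3 (by decide))
      (hclique 1 2 (by decide)) (hclique 1 3 (by decide)) (hclique 2 3 (by decide))
      huadj (huno 0 (by decide)) (huno 2 (by decide)) (huno 3 (by decide))
      (hune 0) (hune 2) (hune 3)
      hvadj (hvno 0 (by decide)) (hvno 1 (by decide)) (hvno 3 (by decide))
      (hvne 0) (hvne 1) (hvne 3) huv
    · intro y hy
      rw [hP 0] at hy
      obtain ⟨hyne, hyadj, hyno⟩ := hy
      exact ⟨hyadj, ⟨hyno 1 (by decide), hyno 2 (by decide), hyno 3 (by decide)⟩,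
        ⟨hyne 1, hyne 2, hyne 3⟩,
        ⟨fun h => hyno 1 (by decide) (h ▸ huadj), fun h => hyno 2 (by decide) (h ▸ hvadj)⟩⟩
    · intro y hy z hz hyz hadj
      rw [hP 0] at hy hz
      obtain ⟨hyne, hyadj, hyno⟩ := hy
      obtain ⟨hzne, hzadj, hzno⟩ := hz
      exact pillar_indep hε hTd hω (x 1) (x 2) (x 3) y z
        (hclique 1 2 (by decide)) (hclique 1 3 (by decide)) (hclique 2 3 (by decide)) hadj
        (hyno 1 (by decide)) (hyno 2 (by decide)) (hyno 3 (by decide))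
        (hzno 1 (by decide)) (hzno 2 (by decide)) (hzno 3 (by decide))
        (hyne 1) (hyne 2) (hyne 3) (hzne 1) (hzne 2) (hzne 3)
  · apply key (seidelOf G) G rfl hpsdT (x 3) (x 1) (x 2) (x 0) u v
      (hclique 3 1 (by decide)) (hclique 3 2 (by decide)) (hclique 3 0 (by decide))
      (hclique 1 2 (by decide)) (hclique 1 0 (by decide)) (hclique 2 0 (by decide))
      huadj (huno 3 (by decide)) (huno 2 (by decide)) (huno 0 (by decide))
      (hune 3) (hune 2) (hune 0)
      hvadj (hvno 3 (by decide)) (hvno 1 (by decide)) (hvno 0 (by decide))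
      (hvne 3) (hvne 1) (hvne 0) huv
    · intro y hy
      rw [hP 3] at hy
      obtain ⟨hyne, hyadj, hyno⟩ := hy
      exact ⟨hyadj, ⟨hyno 1 (by decide), hyno 2 (by decide), hyno 0 (by decide)⟩,
        ⟨hyne 1, hyne 2, hyne 0⟩,
        ⟨fun h => hyno 1 (by decide) (h ▸ huadj), fun h => hyno 2 (by decide) (h ▸ hvadj)⟩⟩
    · intro y hy z hz hyz hadj
      rw [hP 3] at hy hz
      obtain ⟨hyne, hyadj, hyno⟩ := hy
      obtain ⟨hzne, hzadj, hzno⟩ := hz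
      exact pillar_indep hε hTd hω (x 0) (x 1) (x 2) y z
        (hclique 0 1 (by decide)) (hclique 0 2 (by decide)) (hclique 1 2 (by decide)) hadj
        (hyno 0 (by decide)) (hyno 1 (by decide)) (hyno 2 (by decide))
        (hzno 0 (by decide)) (hzno 1 (by decide)) (hzno 2 (by decide))
        (hyne 0) (hyne 1) (hyne 2) (hzne 0) (hzne 1) (hzne 2)
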